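/- arXiv:2012.10959 — 4 statements merged into one kernel-verified Lean document; each statement's English description precedes it below -/
import Mathlib

section
/- Let J ∈ M_d(ℂ) ⊗ M_d(ℂ) be a Hermitian matrix with tr_B(J) = I_d (the Choi matrix of an HPTP map). Then the minimum of p₁ + p₂ over all (p₁, p₂, J₁, J₂) with J = J₁ − J₂, J₁ ≥ 0, J₂ ≥ 0, tr_B(J₁) = p₁ I_d, tr_B(J₂) = p₂ I_d equals the minimum of p₁ + p₂ over all (p₁, p₂, J₁, J₂) with J = J₁ − J₂, J₁ ≥ 0, J₂ ≥ 0, tr_B(J₁) ≤ p₁ I_d, tr_B(J₂) ≤ p₂ I_d. -/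
open scoped Kronecker ComplexOrder
open Matrix

noncomputable section

/-- `id_k ⊗ N` applied blockwise. -/
def idTensor {n m : Type*} (k : Type*)
    (N : Matrix n n ℂ → Matrix m m ℂ)
    (M : Matrix (k × n) (k × n) ℂ) : Matrix (k × m) (k × m) ℂ :=
  Matrix.of fun p q => N (Matrix.of fun a b => M (p.1, a) (q.1, b)) p.2 q.2

/-- Trace-preserving. -/
def IsTP {n m : Type*} [Fintype n] [Fintype m]
    (N : Matrix n n ℂ → Matrix m m ℂ) : Prop :=
  ∀ X, (N X).trace = X.trace

/-- Hermitian-preserving. -/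
def IsHP {n m : Type*} (N : Matrix n n ℂ → Matrix m m ℂ) : Prop :=
  ∀ X, X.IsHermitian → (N X).IsHermitian

/-- Completely positive: for every `k`, `id_k ⊗ N` preserves positive semidefiniteness. -/
def IsCP {n m : Type*} [Fintype n] [Fintype m]
    (N : Matrix n n ℂ → Matrix m m ℂ) : Prop :=
  ∀ (k : ℕ) (M : Matrix (Fin k × n) (Fin k × n) ℂ),
    M.PosSemidef → (idTensor (Fin k) N M).PosSemidef

/-- Completely positive and trace-preserving (quantum channel). -/
def IsCPTP {n m : Type*} [Fintype n] [Fintype m]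
    (N : Matrix n n ℂ → Matrix m m ℂ) : Prop :=
  IsLinearMap ℂ N ∧ IsCP N ∧ IsTP N

/-- Completely positive and trace non-increasing. -/
def IsCPTN {n m : Type*} [Fintype n] [Fintype m]
    (N : Matrix n n ℂ → Matrix m m ℂ) : Prop :=
  IsLinearMap ℂ N ∧ IsCP N ∧ ∀ X : Matrix n n ℂ, X.PosSemidef → (N X).trace ≤ X.trace

/-- Costs of finite quasiprobability decompositions of `N` into CPTP maps. -/
def decompCosts {n m : Type*} [Fintype n] [Fintype m]
    (N : Matrix n n ℂ → Matrix m m ℂ) : Set ℝ :=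
  { c | ∃ (s : ℕ) (η : Fin s → ℝ) (O : Fin s → (Matrix n n ℂ → Matrix m m ℂ)),
      (∀ i, IsCPTP (O i)) ∧ (∀ X, N X = ∑ i, (η i : ℂ) • O i X) ∧ c = ∑ i, |η i| }

/-- The physical implementability `ν(N)`. -/
noncomputable def nu {n m : Type*} [Fintype n] [Fintype m]
    (N : Matrix n n ℂ → Matrix m m ℂ) : ℝ :=
  Real.logb 2 (sInf (decompCosts N))

/-- The Choi matrix of a linear map. -/
def choiMatrix {n m : Type*} [DecidableEq n]
    (N : Matrix n n ℂ → Matrix m m ℂ) : Matrix (n × m) (n × m) ℂ :=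
  Matrix.of fun p q => N (Matrix.single p.1 q.1 1) p.2 q.2

/-- Partial trace over the second tensor factor. -/
def ptraceB {n m : Type*} [Fintype m] (J : Matrix (n × m) (n × m) ℂ) :
    Matrix n n ℂ :=
  Matrix.of fun i j => ∑ a, J (i, a) (j, a)

/-- The trace norm of a matrix. -/
noncomputable def traceNorm {k : Type*} [Fintype k] [DecidableEq k]
    (X : Matrix k k ℂ) : ℝ :=
  (((Matrix.posSemidef_conjTranspose_mul_self X).1.eigenvectorUnitary.1 *
      Matrix.diagonal (((↑) : ℝ → ℂ) ∘ (√·) ∘ (Matrix.posSemidef_conjTranspose_mul_self X).1.eigenvalues) *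
      (star (Matrix.posSemidef_conjTranspose_mul_self X).1.eigenvectorUnitary : Matrix k k ℂ)).trace).re

/-- Tensor product of two maps. -/
def tensorMap {n₁ n₂ m₂ : Type*} [Fintype n₁] [DecidableEq n₁]
    (M : Matrix n₁ n₁ ℂ → Matrix n₁ n₁ ℂ) (N : Matrix n₂ n₂ ℂ → Matrix m₂ m₂ ℂ)
    (X : Matrix (n₁ × n₂) (n₁ × n₂) ℂ) : Matrix (n₁ × m₂) (n₁ × m₂) ℂ :=
  ∑ i : n₁, ∑ j : n₁,
    (M (Matrix.single i j 1)) ⊗ₖ (N (Matrix.of fun a b => X (i, a) (j, b)))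


set_option linter.unusedSectionVars false
set_option linter.unusedTactic false

section Aux
variable {n m : Type*} [Fintype m]

lemma ptraceB_sub (A B : Matrix (n × m) (n × m) ℂ) :
    ptraceB (A - B) = ptraceB A - ptraceB B := by
  ext i j
  simp [ptraceB, Finset.sum_sub_distrib]

lemma ptraceB_add (A B : Matrix (n × m) (n × m) ℂ) :
    ptraceB (A + B) = ptraceB A + ptraceB B := by
  ext i j
  simp [ptraceB, Finset.sum_add_distrib]

lemma ptraceB_smul (c : ℂ) (A : Matrix (n × m) (n × m) ℂ) :
    ptraceB (c • A) = c • ptraceB A := by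
  ext i j
  simp [ptraceB, Finset.mul_sum]

end Aux

section Aux2
variable {k : Type*} [Fintype k] [DecidableEq k]

lemma psd_smul {c : ℝ} (hc : 0 ≤ c) {M : Matrix k k ℂ} (hM : M.PosSemidef) :
    ((c : ℂ) • M).PosSemidef := by
  refine Matrix.PosSemidef.of_dotProduct_mulVec_nonneg ?_ ?_
  · unfold Matrix.IsHermitian at *
    rw [Matrix.conjTranspose_smul, hM.1]
    congr 1
    simp [Complex.ext_iff]
  · intro x
    have := hM.dotProduct_mulVec_nonneg x
    rw [Matrix.smul_mulVec, dotProduct_smul]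
    exact smul_nonneg (by exact_mod_cast Complex.zero_le_real.2 hc) this

lemma psd_entry_nonneg {M : Matrix k k ℂ} (hM : M.PosSemidef) (i : k) :
    0 ≤ M i i := by
  have := hM.dotProduct_mulVec_nonneg (Pi.single i 1)
  simpa [Matrix.mulVec_single, dotProduct, Pi.single_apply, Finset.sum_ite_eq'] using this

end Aux2

set_option linter.unusedSectionVars false

section Aux3
variable {k : Type*} [Fintype k] [DecidableEq k]

lemma psd_diag_re_nonneg {M : Matrix k k ℂ} (hM : M.PosSemidef) (i : k) :
    0 ≤ (M i i).re ∧ (M i i).im = 0 := by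
  have h := psd_entry_nonneg hM i
  exact ⟨(Complex.le_def.1 h).1, ((Complex.le_def.1 h).2).symm⟩

lemma psd_diag_re_le_trace {M : Matrix k k ℂ} (hM : M.PosSemidef) (i : k) :
    (M i i).re ≤ (Matrix.trace M).re := by
  have : (Matrix.trace M).re = ∑ j, (M j j).re := by
    simp [Matrix.trace, Matrix.diag, Complex.re_sum]
  rw [this]
  exact Finset.single_le_sum (fun j _ => (psd_diag_re_nonneg hM j).1) (Finset.mem_univ i)

lemma quad_two (M : Matrix k k ℂ) (p q : k) (c : ℂ) :
    star (Pi.single p 1 + Pi.single q c) ⬝ᵥ M *ᵥ (Pi.single p 1 + Pi.single q c)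
      = M p p + M p q * c + ((starRingEnd ℂ) c * M q p + (starRingEnd ℂ) c * (M q q * c)) := by
  simp [star_add, Matrix.mulVec_add, dotProduct_add, add_dotProduct,
    single_dotProduct, Matrix.mulVec_single, ← Pi.single_star, mul_comm, mul_assoc,
    mul_left_comm]
  ring

lemma psd_abs_entry_le_trace {M : Matrix k k ℂ} (hM : M.PosSemidef) (p q : k) :
    ‖M p q‖ ≤ (Matrix.trace M).re := by
  by_cases hz : M p q = 0
  · simp [hz]
    exact le_trans (psd_diag_re_nonneg hM p).1 (psd_diag_re_le_trace hM p)
  · set r : ℝ := ‖M p q‖ with hr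
    have hr0 : 0 < r := by
      rw [hr]; exact norm_pos_iff.mpr hz
    set c : ℂ := -((starRingEnd ℂ) (M p q)) / r with hc
    have hcc : (starRingEnd ℂ) c * c = 1 := by
      rw [hc]
      simp only [map_div₀, map_neg, Complex.conj_conj, Complex.conj_ofReal]
      field_simp
      rw [Complex.mul_conj, Complex.normSq_eq_norm_sq, ← hr]
      push_cast; ring
    have hquad := hM.dotProduct_mulVec_nonneg (Pi.single p 1 + Pi.single q c)
    rw [quad_two] at hquad
    have h1 : M p q * c = -(r : ℂ) := by
      rw [hc]
      field_simp
      rw [Complex.mul_conj, Complex.normSq_eq_norm_sq, ← hr]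
      push_cast; ring
    have h2 : (starRingEnd ℂ) c * M q p = -(r : ℂ) := by
      have hqp : M q p = (starRingEnd ℂ) (M p q) := by
        have := hM.1
        rw [Matrix.IsHermitian] at this
        calc M q p = Mᴴ q p := by rw [this]
        _ = (starRingEnd ℂ) (M p q) := rfl
      rw [hqp, hc]
      simp only [map_div₀, map_neg, Complex.conj_conj, Complex.conj_ofReal]
      field_simp
      rw [Complex.mul_conj, Complex.normSq_eq_norm_sq, ← hr]
      push_cast; ring
    have h3 : (starRingEnd ℂ) c * (M q q * c) = M q q := by
      rw [mul_left_comm, ← mul_assoc, mul_assoc, hcc, mul_one]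
    rw [h1, h2, h3] at hquad
    have hre := (Complex.le_def.1 hquad).1
    simp only [Complex.add_re, Complex.neg_re, Complex.ofReal_re, Complex.zero_re] at hre
    have hp := psd_diag_re_le_trace hM p
    have hq := psd_diag_re_le_trace hM q
    linarith

end Aux3

section Aux4
variable {k : Type*} [Fintype k] [DecidableEq k]

lemma herm_shift_psd {M : Matrix k k ℂ} (hM : M.IsHermitian) :
    ∃ lam : ℝ, 0 ≤ lam ∧ (M + (lam : ℂ) • 1).PosSemidef := by
  refine ⟨∑ i, |hM.eigenvalues i|, Finset.sum_nonneg fun i _ => abs_nonneg _, ?_⟩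
  set lam := ∑ i, |hM.eigenvalues i| with hlam
  have hsmul : ((lam : ℂ) • (1 : Matrix k k ℂ)) = Matrix.diagonal (fun _ => (lam : ℂ)) := by
    ext i j
    by_cases h : i = j <;> simp [h, Matrix.one_apply, Matrix.diagonal_apply]
  have key : M + (lam : ℂ) • 1
      = (hM.eigenvectorUnitary : Matrix k k ℂ) *
          Matrix.diagonal (fun i => ((hM.eigenvalues i + lam : ℝ) : ℂ)) *
          ((hM.eigenvectorUnitary : Matrix k k ℂ))ᴴ := by
    have hU : (hM.eigenvectorUnitary : Matrix k k ℂ) *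
        ((hM.eigenvectorUnitary : Matrix k k ℂ))ᴴ = 1 := by
      rw [← Matrix.star_eq_conjTranspose]
      exact (Matrix.mem_unitaryGroup_iff).mp (hM.eigenvectorUnitary).2
    have hspec := hM.spectral_theorem
    rw [← Matrix.star_eq_conjTranspose]
    calc M + (lam : ℂ) • 1
        = (hM.eigenvectorUnitary : Matrix k k ℂ) *
            Matrix.diagonal (RCLike.ofReal ∘ hM.eigenvalues) *
            (star (hM.eigenvectorUnitary : Matrix k k ℂ)) + (lam : ℂ) • 1 := by exact congrArg (· + (lam : ℂ) • 1) hspec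
      _ = (hM.eigenvectorUnitary : Matrix k k ℂ) *
            (Matrix.diagonal (RCLike.ofReal ∘ hM.eigenvalues) + Matrix.diagonal (fun _ => (lam:ℂ))) *
            (star (hM.eigenvectorUnitary : Matrix k k ℂ)) := by
          rw [Matrix.mul_add, Matrix.add_mul]
          congr 1
          rw [← Matrix.star_eq_conjTranspose] at hU
          rw [← hsmul, Matrix.mul_smul, Matrix.mul_one, Matrix.smul_mul, hU]
      _ = _ := by
          rw [Matrix.diagonal_add]
          congr 2
          ext i
          push_cast
          simp
  rw [key]
  refine Matrix.PosSemidef.mul_mul_conjTranspose_same ?_ _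
  refine Matrix.posSemidef_diagonal_iff.mpr fun i => ?_
  rw [show ((0:ℂ) = ((0:ℝ):ℂ)) by norm_num, Complex.real_le_real]
  have h1 : |hM.eigenvalues i| ≤ lam :=
    Finset.single_le_sum (fun j _ => abs_nonneg (hM.eigenvalues j)) (Finset.mem_univ i)
  have := neg_abs_le (hM.eigenvalues i)
  linarith

end Aux4

section Aux5
variable {d : ℕ}

lemma ptraceB_kron_one (E : Matrix (Fin d) (Fin d) ℂ) :
    ptraceB (E ⊗ₖ (1 : Matrix (Fin d) (Fin d) ℂ)) = (d : ℂ) • E := by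
  ext i j
  simp [ptraceB, Matrix.one_apply, Finset.sum_const, mul_comm]

lemma psd_kron_one {E : Matrix (Fin d) (Fin d) ℂ} (hE : E.PosSemidef) :
    (E ⊗ₖ (1 : Matrix (Fin d) (Fin d) ℂ)).PosSemidef := by
  refine Matrix.PosSemidef.of_dotProduct_mulVec_nonneg ?_ ?_
  · ext ⟨i, a⟩ ⟨j, b⟩
    simp only [Matrix.conjTranspose_apply, Matrix.kroneckerMap_apply, star_mul',
      Matrix.one_apply]
    rw [hE.1.apply i j]
    by_cases h : a = b <;> simp [h, eq_comm, mul_comm]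
  · intro x
    have hx : star x ⬝ᵥ (E ⊗ₖ (1 : Matrix (Fin d) (Fin d) ℂ)) *ᵥ x
        = ∑ a, star (fun i => x (i, a)) ⬝ᵥ E *ᵥ (fun i => x (i, a)) := by
      simp only [dotProduct, Matrix.mulVec, Pi.star_apply,
        Matrix.kroneckerMap_apply, Matrix.one_apply]
      rw [Fintype.sum_prod_type]
      rw [Finset.sum_comm]
      refine Finset.sum_congr rfl fun a _ => Finset.sum_congr rfl fun i _ => ?_
      congr 1
      rw [Fintype.sum_prod_type]
      rw [Finset.sum_comm]
      simp [mul_ite, ite_mul, Finset.sum_ite_eq, Finset.mem_univ]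
    rw [hx]
    exact Finset.sum_nonneg fun a _ => hE.dotProduct_mulVec_nonneg _

end Aux5

section Aux6
variable {d : ℕ}

lemma ptraceB_one :
    ptraceB (1 : Matrix (Fin d × Fin d) (Fin d × Fin d) ℂ) = (d : ℂ) • 1 := by
  ext i j
  by_cases h : i = j <;>
    simp [ptraceB, Matrix.one_apply, Prod.ext_iff, h]

lemma trace_eq_sum_ptraceB (A : Matrix (Fin d × Fin d) (Fin d × Fin d) ℂ) :
    Matrix.trace A = ∑ i, ptraceB A i i := by
  simp [Matrix.trace, Matrix.diag, ptraceB, Fintype.sum_prod_type]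

end Aux6

section Top
attribute [local instance] Matrix.normedAddCommGroup Matrix.normedSpace
variable {d : ℕ}

local notation "ι" => (Fin d × Fin d)
local notation "Mat" => Matrix (Fin d × Fin d) (Fin d × Fin d) ℂ

lemma cont_entry (p q : ι) : Continuous fun M : Mat => M p q :=
  (continuous_apply q).comp (continuous_apply p)

lemma cont_quad (x : ι → ℂ) :
    Continuous fun M : Mat => star x ⬝ᵥ M *ᵥ x := by
  have : (fun M : Mat => star x ⬝ᵥ M *ᵥ x)
      = fun M : Mat => ∑ p, ∑ q, (star x p) * (M p q * x q) := by
    funext M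
    simp [dotProduct, Matrix.mulVec, Finset.mul_sum]
  rw [this]
  refine continuous_finset_sum _ fun p _ => continuous_finset_sum _ fun q _ => ?_
  exact continuous_const.mul ((cont_entry p q).mul continuous_const)

lemma isClosed_complex_nonneg : IsClosed {z : ℂ | 0 ≤ z} := by
  have : {z : ℂ | 0 ≤ z} = Complex.re ⁻¹' Set.Ici 0 ∩ Complex.im ⁻¹' {0} := by
    ext z
    simp [Complex.nonneg_iff, eq_comm]
  rw [this]
  exact (isClosed_Ici.preimage Complex.continuous_re).inter
    (isClosed_singleton.preimage Complex.continuous_im)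

lemma isClosed_psd : IsClosed {M : Mat | M.PosSemidef} := by
  have hset : {M : Mat | M.PosSemidef} =
      {M : Mat | Mᴴ = M} ∩ ⋂ x : ι → ℂ, {M : Mat | 0 ≤ star x ⬝ᵥ M *ᵥ x} := by
    ext M
    simp [Matrix.posSemidef_iff_dotProduct_mulVec, Matrix.IsHermitian, Set.mem_iInter, Set.mem_inter_iff]
  rw [hset]
  have hct : Continuous fun M : Mat => Mᴴ := by
    refine continuous_pi fun i => continuous_pi fun j => ?_
    exact continuous_star.comp (cont_entry j i)
  refine (isClosed_eq hct continuous_id).inter (isClosed_iInter fun x => ?_)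
  exact isClosed_complex_nonneg.preimage (cont_quad x)

lemma cont_ptraceB_entry (p q : Fin d) :
    Continuous fun M : Mat => ptraceB M p q := by
  have : (fun M : Mat => ptraceB M p q) = fun M : Mat => ∑ a, M (p, a) (q, a) := rfl
  rw [this]
  exact continuous_finset_sum _ fun a _ => cont_entry _ _

lemma cont_ptraceB : Continuous fun M : Mat => ptraceB M :=
  continuous_pi fun p => continuous_pi fun q => cont_ptraceB_entry p q

lemma cont_trace_re : Continuous fun M : Mat => (Matrix.trace M).re := by
  have : (fun M : Mat => (Matrix.trace M).re) = fun M : Mat => ∑ k, (M k k).re := by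
    funext M
    simp [Matrix.trace, Matrix.diag, Complex.re_sum]
  rw [this]
  exact continuous_finset_sum _ fun k _ => Complex.continuous_re.comp (cont_entry k k)

end Top

section Top2
attribute [local instance] Matrix.normedAddCommGroup Matrix.normedSpace
variable {d : ℕ}

local notation "Mat" => Matrix (Fin d × Fin d) (Fin d × Fin d) ℂ

lemma exists_isMinOn_trace (K : Set Mat) (hK : IsClosed K)
    (hpsd : ∀ A ∈ K, Matrix.PosSemidef A) (A₀ : Mat) (hA₀ : A₀ ∈ K) :
    ∃ A ∈ K, ∀ B ∈ K, (Matrix.trace A).re ≤ (Matrix.trace B).re := by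
  haveI : FiniteDimensional ℂ Mat := by
    change FiniteDimensional ℂ ((Fin d × Fin d) → (Fin d × Fin d) → ℂ)
    infer_instance
  haveI : ProperSpace Mat := FiniteDimensional.proper ℂ Mat
  set t₀ := (Matrix.trace A₀).re with ht₀
  set K' := K ∩ {A : Mat | (Matrix.trace A).re ≤ t₀} with hK'
  have hK'c : IsClosed K' := hK.inter (isClosed_le cont_trace_re continuous_const)
  have hbd : Bornology.IsBounded K' := by
    refine (Metric.isBounded_iff_subset_closedBall 0).2 ⟨max t₀ 0, fun A hA => ?_⟩
    rw [Metric.mem_closedBall, dist_zero_right]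
    rw [Matrix.norm_le_iff (le_max_right _ _)]
    intro p q
    calc ‖A p q‖ = ‖A p q‖ := rfl
      _ ≤ (Matrix.trace A).re := psd_abs_entry_le_trace (hpsd A hA.1) p q
      _ ≤ t₀ := hA.2
      _ ≤ max t₀ 0 := le_max_left _ _
  have hcpt : IsCompact K' := Metric.isCompact_of_isClosed_isBounded hK'c hbd
  have hne : K'.Nonempty := ⟨A₀, hA₀, le_of_eq ht₀.symm⟩
  obtain ⟨A, hA, hmin⟩ := hcpt.exists_isMinOn hne cont_trace_re.continuousOn
  refine ⟨A, hA.1, fun B hB => ?_⟩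
  by_cases h : (Matrix.trace B).re ≤ t₀
  · exact hmin ⟨hB, h⟩
  · have hA₀' : A₀ ∈ K' := ⟨hA₀, le_of_eq ht₀.symm⟩
    exact le_trans (hmin hA₀') (le_of_not_ge h)

end Top2

section Aux7
variable {d : ℕ}

lemma trace_of_ptraceB_eq {A : Matrix (Fin d × Fin d) (Fin d × Fin d) ℂ} {p : ℝ}
    (h : ptraceB A = (p : ℂ) • 1) : Matrix.trace A = ((p * d : ℝ) : ℂ) := by
  rw [trace_eq_sum_ptraceB, h]
  simp [Matrix.one_apply]
  push_cast
  ring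

lemma entry_smul_one (p : ℝ) (i : Fin d) :
    ((p : ℂ) • (1 : Matrix (Fin d) (Fin d) ℂ)) i i = (p : ℂ) := by
  simp

end Aux7

section MainSec
attribute [local instance] Matrix.normedAddCommGroup Matrix.normedSpace

/-- for a Hermitian Choi matrix `J` with `tr_B J = I`, the minimum of
`p₁ + p₂` over decompositions `J = J₁ - J₂` with `tr_B Jᵢ = pᵢ I` equals the minimum
over decompositions with `tr_B Jᵢ ≤ pᵢ I`. -/
theorem choi_primal_eq_relaxed_primal {d : ℕ} (hd : 0 < d)
    (J : Matrix (Fin d × Fin d) (Fin d × Fin d) ℂ)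
    (hJ : J.IsHermitian) (htr : ptraceB J = 1) :
    ∃ c : ℝ,
      IsLeast { c : ℝ | ∃ (p₁ p₂ : ℝ) (J₁ J₂ : Matrix (Fin d × Fin d) (Fin d × Fin d) ℂ),
        J = J₁ - J₂ ∧ J₁.PosSemidef ∧ J₂.PosSemidef ∧
        ptraceB J₁ = (p₁ : ℂ) • 1 ∧ ptraceB J₂ = (p₂ : ℂ) • 1 ∧ c = p₁ + p₂ } c ∧
      IsLeast { c : ℝ | ∃ (p₁ p₂ : ℝ) (J₁ J₂ : Matrix (Fin d × Fin d) (Fin d × Fin d) ℂ),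
        J = J₁ - J₂ ∧ J₁.PosSemidef ∧ J₂.PosSemidef ∧
        ((p₁ : ℂ) • 1 - ptraceB J₁).PosSemidef ∧
        ((p₂ : ℂ) • 1 - ptraceB J₂).PosSemidef ∧ c = p₁ + p₂ } c := by
  classical
  set i₀ : Fin d := ⟨0, hd⟩ with hi₀
  have hdℝ : (0:ℝ) < (d:ℝ) := by exact_mod_cast hd
  set S₁ : Set ℝ := { c : ℝ | ∃ (p₁ p₂ : ℝ) (J₁ J₂ : Matrix (Fin d × Fin d) (Fin d × Fin d) ℂ),
        J = J₁ - J₂ ∧ J₁.PosSemidef ∧ J₂.PosSemidef ∧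
        ptraceB J₁ = (p₁ : ℂ) • 1 ∧ ptraceB J₂ = (p₂ : ℂ) • 1 ∧ c = p₁ + p₂ } with hS₁
  set S₂ : Set ℝ := { c : ℝ | ∃ (p₁ p₂ : ℝ) (J₁ J₂ : Matrix (Fin d × Fin d) (Fin d × Fin d) ℂ),
        J = J₁ - J₂ ∧ J₁.PosSemidef ∧ J₂.PosSemidef ∧
        ((p₁ : ℂ) • 1 - ptraceB J₁).PosSemidef ∧
        ((p₂ : ℂ) • 1 - ptraceB J₂).PosSemidef ∧ c = p₁ + p₂ } with hS₂
  -- The feasible region, parametrized by the positive part `A = J₁`.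
  set K : Set (Matrix (Fin d × Fin d) (Fin d × Fin d) ℂ) :=
    {A | A.PosSemidef ∧ (A - J).PosSemidef ∧
      ptraceB A = (((ptraceB A i₀ i₀).re : ℝ) : ℂ) • 1} with hKdef
  -- `K` is closed
  have hKclosed : IsClosed K := by
    have h1 : IsClosed {A : Matrix (Fin d × Fin d) (Fin d × Fin d) ℂ | A.PosSemidef} :=
      isClosed_psd
    have h2 : IsClosed {A : Matrix (Fin d × Fin d) (Fin d × Fin d) ℂ | (A - J).PosSemidef} := by
      have : Continuous fun A : Matrix (Fin d × Fin d) (Fin d × Fin d) ℂ => A - J :=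
        continuous_id.sub continuous_const
      exact isClosed_psd.preimage this
    have h3 : IsClosed {A : Matrix (Fin d × Fin d) (Fin d × Fin d) ℂ |
        ptraceB A = (((ptraceB A i₀ i₀).re : ℝ) : ℂ) • 1} := by
      refine isClosed_eq cont_ptraceB ?_
      exact (Complex.continuous_ofReal.comp
        (Complex.continuous_re.comp (cont_ptraceB_entry i₀ i₀))).smul continuous_const
    have : K = ({A | Matrix.PosSemidef A} ∩ {A | Matrix.PosSemidef (A - J)}) ∩
        {A : Matrix (Fin d × Fin d) (Fin d × Fin d) ℂ |
          ptraceB A = (((ptraceB A i₀ i₀).re : ℝ) : ℂ) • 1} := by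
      rw [hKdef]
      ext A
      constructor
      · rintro ⟨a, b, c⟩; exact ⟨⟨a, b⟩, c⟩
      · rintro ⟨⟨a, b⟩, c⟩; exact ⟨a, b, c⟩
    rw [this]
    exact (h1.inter h2).inter h3
  have hKpsd : ∀ A ∈ K, Matrix.PosSemidef A := fun A hA => hA.1
  -- a feasible point
  obtain ⟨lam, hlam0, hlampsd⟩ := herm_shift_psd hJ
  set A₀ := J + (lam : ℂ) • 1 with hA₀def
  have hA₀tr : ptraceB A₀ = ((1 + lam * d : ℝ) : ℂ) • 1 := by
    rw [hA₀def, ptraceB_add, ptraceB_smul, htr, ptraceB_one]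
    push_cast
    module
  have hA₀K : A₀ ∈ K := by
    refine ⟨hlampsd, ?_, ?_⟩
    · have h : A₀ - J = (lam : ℂ) • 1 := by rw [hA₀def]; abel
      rw [h]
      exact psd_smul hlam0 Matrix.PosSemidef.one
    · have he : (ptraceB A₀ i₀ i₀).re = 1 + lam * d := by
        rw [hA₀tr, entry_smul_one, Complex.ofReal_re]
      rw [he, hA₀tr]
  obtain ⟨A, hAK, hAmin⟩ := exists_isMinOn_trace K hKclosed hKpsd A₀ hA₀K
  set pA : ℝ := (ptraceB A i₀ i₀).re with hpA
  set c := 2 * pA - 1 with hc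
  have hcS₁ : c ∈ S₁ := by
    refine ⟨pA, pA - 1, A, A - J, (sub_sub_cancel A J).symm, hAK.1, hAK.2.1, hAK.2.2, ?_, by ring⟩
    rw [ptraceB_sub, hAK.2.2, htr]
    push_cast
    module
  have hS₁lb : ∀ c' ∈ S₁, c ≤ c' := by
    rintro c' ⟨p₁, p₂, J₁, J₂, hJeq, h1, h2, ht1, ht2, hcost⟩
    have hJ₁K : J₁ ∈ K := by
      refine ⟨h1, ?_, ?_⟩
      · have h : J₁ - J = J₂ := by rw [hJeq]; abel
        rw [h]; exact h2
      · have he : (ptraceB J₁ i₀ i₀).re = p₁ := by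
          rw [ht1, entry_smul_one, Complex.ofReal_re]
        rw [he, ht1]
    have hdiff : p₁ - p₂ = 1 := by
      have h := htr
      rw [hJeq, ptraceB_sub, ht1, ht2] at h
      have h' := congrArg (fun M : Matrix (Fin d) (Fin d) ℂ => M i₀ i₀) h
      simp only [Matrix.sub_apply, entry_smul_one, Matrix.one_apply_eq] at h'
      have : ((p₁ - p₂ : ℝ) : ℂ) = ((1:ℝ):ℂ) := by push_cast; rw [← h']
      exact_mod_cast this
    have htA : (Matrix.trace A).re = pA * d := by
      rw [trace_of_ptraceB_eq hAK.2.2, Complex.ofReal_re]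
    have htJ₁ : (Matrix.trace J₁).re = p₁ * d := by
      rw [trace_of_ptraceB_eq ht1, Complex.ofReal_re]
    have hle := hAmin J₁ hJ₁K
    rw [htA, htJ₁] at hle
    have hpAle : pA ≤ p₁ := le_of_mul_le_mul_right (by linarith) hdℝ
    rw [hcost, hc]
    linarith
  have hsub : S₁ ⊆ S₂ := by
    rintro c' ⟨p₁, p₂, J₁, J₂, hJeq, h1, h2, ht1, ht2, hcost⟩
    refine ⟨p₁, p₂, J₁, J₂, hJeq, h1, h2, ?_, ?_, hcost⟩
    · rw [ht1, sub_self]; exact Matrix.PosSemidef.zero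
    · rw [ht2, sub_self]; exact Matrix.PosSemidef.zero
  have hrelax : ∀ c' ∈ S₂, ∃ c'' ∈ S₁, c'' ≤ c' := by
    rintro c' ⟨p₁, p₂, J₁, J₂, hJeq, h1, h2, hD1, hD2, hcost⟩
    set D₁ := (p₁ : ℂ) • (1 : Matrix (Fin d) (Fin d) ℂ) - ptraceB J₁ with hD₁def
    set D₂ := (p₂ : ℂ) • (1 : Matrix (Fin d) (Fin d) ℂ) - ptraceB J₂ with hD₂def
    have hptr : ptraceB J₁ - ptraceB J₂ = 1 := by
      rw [← ptraceB_sub, ← hJeq, htr]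
    have hDdiff : D₁ - D₂ = ((p₁ - p₂ - 1 : ℝ) : ℂ) • 1 := by
      rw [hD₁def, hD₂def, sub_sub_sub_comm, hptr]
      push_cast
      module
    have hdinv : ((d:ℂ))⁻¹ = ((d⁻¹ : ℝ) : ℂ) := by push_cast; ring
    have hdne : (d:ℂ) ≠ 0 := by exact_mod_cast hd.ne'
    rcases le_total p₁ (p₂ + 1) with hcase | hcase
    · set C := ((d : ℂ))⁻¹ • (D₁ ⊗ₖ (1 : Matrix (Fin d) (Fin d) ℂ)) with hCdef
      have hCpsd : C.PosSemidef := by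
        rw [hCdef, hdinv]
        exact psd_smul (by positivity) (psd_kron_one hD1)
      have hCtr : ptraceB C = D₁ := by
        rw [hCdef, ptraceB_smul, ptraceB_kron_one, smul_smul,
          inv_mul_cancel₀ hdne, one_smul]
      refine ⟨p₁ + (p₁ - 1), ⟨p₁, p₁ - 1, J₁ + C, J₂ + C, ?_, h1.add hCpsd,
        h2.add hCpsd, ?_, ?_, rfl⟩, ?_⟩
      · rw [hJeq]; abel
      · rw [ptraceB_add, hCtr, hD₁def]; abel
      · rw [ptraceB_add, hCtr]
        have h : D₁ = D₂ + ((p₁ - p₂ - 1:ℝ):ℂ) • 1 := by rw [← hDdiff]; abel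
        rw [h, hD₂def]
        push_cast
        module
      · rw [hcost]; linarith
    · set C := ((d : ℂ))⁻¹ • (D₂ ⊗ₖ (1 : Matrix (Fin d) (Fin d) ℂ)) with hCdef
      have hCpsd : C.PosSemidef := by
        rw [hCdef, hdinv]
        exact psd_smul (by positivity) (psd_kron_one hD2)
      have hCtr : ptraceB C = D₂ := by
        rw [hCdef, ptraceB_smul, ptraceB_kron_one, smul_smul,
          inv_mul_cancel₀ hdne, one_smul]
      refine ⟨(p₂ + 1) + p₂, ⟨p₂ + 1, p₂, J₁ + C, J₂ + C, ?_, h1.add hCpsd,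
        h2.add hCpsd, ?_, ?_, rfl⟩, ?_⟩
      · rw [hJeq]; abel
      · rw [ptraceB_add, hCtr]
        have h : D₂ = D₁ - ((p₁ - p₂ - 1:ℝ):ℂ) • 1 := by rw [← hDdiff]; abel
        rw [h, hD₁def]
        push_cast
        module
      · rw [ptraceB_add, hCtr, hD₂def]; abel
      · rw [hcost]; linarith
  refine ⟨c, ⟨hcS₁, fun c' hc' => hS₁lb c' hc'⟩, ⟨hsub hcS₁, fun c' hc' => ?_⟩⟩
  obtain ⟨c'', hc''S₁, hle⟩ := hrelax c' hc'
  exact le_trans (hS₁lb c'' hc''S₁) hle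

end MainSec


end
end

section
/- Let N be an HPTP linear map on M_d(ℂ). Then ν(N) = 0 if and only if N is CPTP (completely positive and trace-preserving). -/
open scoped Kronecker ComplexOrder
open Matrix

noncomputable section

/-! ### Auxiliary lemmas -/

noncomputable def cAbs : AbsoluteValue ℂ ℝ := NormedField.toAbsoluteValue ℂ

@[simp] lemma cAbs_apply (z : ℂ) : cAbs z = ‖z‖ := rfl

lemma cAbs_sq (z : ℂ) : cAbs z ^ 2 = Complex.normSq z := Complex.sq_norm z

lemma cAbs_ofReal (r : ℝ) : cAbs (r : ℂ) = |r| := by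
  rw [cAbs_apply, Complex.norm_real, Real.norm_eq_abs]

namespace Matrix.PosSemidef

open scoped MatrixOrder

def sqrt {ι : Type*} [Fintype ι] [DecidableEq ι] {A : Matrix ι ι ℂ} (_hA : A.PosSemidef) :
    Matrix ι ι ℂ := CFC.sqrt A

lemma posSemidef_sqrt {ι : Type*} [Fintype ι] [DecidableEq ι] {A : Matrix ι ι ℂ}
    (hA : A.PosSemidef) : hA.sqrt.PosSemidef :=
  Matrix.nonneg_iff_posSemidef.mp (CFC.sqrt_nonneg A)

lemma sqrt_mul_self {ι : Type*} [Fintype ι] [DecidableEq ι] {A : Matrix ι ι ℂ}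
    (hA : A.PosSemidef) : hA.sqrt * hA.sqrt = A :=
  CFC.sqrt_mul_sqrt_self A (Matrix.nonneg_iff_posSemidef.mpr hA)

end Matrix.PosSemidef

section Aux

open Complex

/-- Quadratic form of a Hermitian matrix is real. -/
lemma herm_quad_real {ι : Type*} [Fintype ι] {A : Matrix ι ι ℂ} (hA : A.IsHermitian)
    (x : ι → ℂ) : star x ⬝ᵥ A *ᵥ x = (((star x ⬝ᵥ A *ᵥ x).re : ℝ) : ℂ) := by
  have h : (starRingEnd ℂ) (star x ⬝ᵥ A *ᵥ x) = star x ⬝ᵥ A *ᵥ x := by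
    have : (starRingEnd ℂ) (star x ⬝ᵥ A *ᵥ x) = ∑ p, ∑ q, x p * (starRingEnd ℂ) (A p q) * (starRingEnd ℂ) (x q) := by
      simp [dotProduct, Matrix.mulVec, map_sum, Finset.mul_sum, mul_comm, mul_assoc, mul_left_comm]
    rw [this]
    have h2 : star x ⬝ᵥ A *ᵥ x = ∑ p, ∑ q, (starRingEnd ℂ) (x p) * A p q * x q := by
      simp [dotProduct, Matrix.mulVec, Finset.mul_sum, mul_assoc]
    rw [h2, Finset.sum_comm]
    refine Finset.sum_congr rfl fun q _ => Finset.sum_congr rfl fun p _ => ?_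
    have : (starRingEnd ℂ) (A p q) = A q p := by
      rw [← hA.apply q p]; rfl
    rw [this]; ring
  have := Complex.conj_eq_iff_re.mp h
  exact this.symm

/-- PSD representation via square root. -/
lemma psd_rep {ι : Type*} [Fintype ι] [DecidableEq ι] {A : Matrix ι ι ℂ} (hA : A.PosSemidef)
    (p q : ι) : A p q = ∑ r, (starRingEnd ℂ) (hA.sqrt r p) * hA.sqrt r q := by
  conv_lhs => rw [← hA.sqrt_mul_self]
  rw [Matrix.mul_apply]
  refine Finset.sum_congr rfl fun r _ => ?_
  have : (starRingEnd ℂ) (hA.sqrt r p) = hA.sqrt p r := hA.posSemidef_sqrt.isHermitian.apply p r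
  rw [this]

lemma posSemidef_sum {ι κ : Type*} [Fintype κ] (s : Finset ι)
    (A : ι → Matrix κ κ ℂ) (h : ∀ i ∈ s, (A i).PosSemidef) :
    (∑ i ∈ s, A i).PosSemidef := by
  classical
  induction s using Finset.induction with
  | empty => simpa using Matrix.PosSemidef.zero
  | insert _ _ hni ih =>
    rw [Finset.sum_insert hni]
    exact ((h _ (Finset.mem_insert_self _ _)).add
      (ih fun i hi => h i (Finset.mem_insert_of_mem hi)))

/-- Reconstruction of a linear map from its Choi matrix. -/
lemma choi_reconstruct {d : ℕ} {N : Matrix (Fin d) (Fin d) ℂ → Matrix (Fin d) (Fin d) ℂ}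
    (hlin : IsLinearMap ℂ N) (X : Matrix (Fin d) (Fin d) ℂ) (a b : Fin d) :
    N X a b = ∑ i, ∑ j, X i j * choiMatrix N (i, a) (j, b) := by
  have hNX : N X = ∑ i, ∑ j, X i j • N (Matrix.single i j 1) := by
    let L := IsLinearMap.mk' N hlin
    have hL : N X = L X := rfl
    rw [hL]
    conv_lhs => rw [Matrix.matrix_eq_sum_single X]
    rw [map_sum]
    refine Finset.sum_congr rfl fun i _ => ?_
    rw [map_sum]
    refine Finset.sum_congr rfl fun j _ => ?_
    have : Matrix.single i j (X i j) = X i j • Matrix.single i j 1 := by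
      rw [Matrix.smul_single, smul_eq_mul, mul_one]
    rw [this, _root_.map_smul]
    rfl
  rw [hNX]
  simp only [Matrix.sum_apply, Matrix.smul_apply, smul_eq_mul]
  rfl

/-- A map with PSD Choi matrix is completely positive. -/
lemma cp_of_choi_psd {d : ℕ} {N : Matrix (Fin d) (Fin d) ℂ → Matrix (Fin d) (Fin d) ℂ}
    (hlin : IsLinearMap ℂ N) (hJ : (choiMatrix N).PosSemidef) : IsCP N := by
  intro k M hM
  set S := hJ.sqrt with hS
  let K : (Fin d × Fin d) → Matrix (Fin d) (Fin d) ℂ :=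
    fun r => Matrix.of fun a i => (starRingEnd ℂ) (S r (i, a))
  have key : idTensor (Fin k) N M
      = ∑ r : Fin d × Fin d,
        ((1 : Matrix (Fin k) (Fin k) ℂ) ⊗ₖ K r) * M * ((1 : Matrix (Fin k) (Fin k) ℂ) ⊗ₖ K r)ᴴ := by
    ext P Q
    have lhs1 : idTensor (Fin k) N M P Q
        = ∑ i, ∑ j, M (P.1, i) (Q.1, j) * choiMatrix N (i, P.2) (j, Q.2) := by
      exact choi_reconstruct hlin _ _ _
    have lhs2 : idTensor (Fin k) N M P Q
        = ∑ r : Fin d × Fin d, ∑ i, ∑ j,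
            K r P.2 i * M (P.1, i) (Q.1, j) * (starRingEnd ℂ) (K r Q.2 j) := by
      rw [lhs1]
      have e2 : ∀ i j : Fin d, choiMatrix N (i, P.2) (j, Q.2)
          = ∑ r : Fin d × Fin d, K r P.2 i * (starRingEnd ℂ) (K r Q.2 j) := by
        intro i j
        rw [psd_rep hJ]
        refine Finset.sum_congr rfl fun r _ => ?_
        simp [K, hS]
      calc ∑ i, ∑ j, M (P.1, i) (Q.1, j) * choiMatrix N (i, P.2) (j, Q.2)
          = ∑ i, ∑ j, ∑ r : Fin d × Fin d,
              K r P.2 i * M (P.1, i) (Q.1, j) * (starRingEnd ℂ) (K r Q.2 j) := by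
            refine Finset.sum_congr rfl fun i _ => Finset.sum_congr rfl fun j _ => ?_
            rw [e2, Finset.mul_sum]
            exact Finset.sum_congr rfl fun r _ => by ring
        _ = ∑ i, ∑ r : Fin d × Fin d, ∑ j,
              K r P.2 i * M (P.1, i) (Q.1, j) * (starRingEnd ℂ) (K r Q.2 j) := by
            exact Finset.sum_congr rfl fun i _ => Finset.sum_comm
        _ = ∑ r : Fin d × Fin d, ∑ i, ∑ j,
              K r P.2 i * M (P.1, i) (Q.1, j) * (starRingEnd ℂ) (K r Q.2 j) :=
            Finset.sum_comm
    rw [lhs2, Matrix.sum_apply]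
    refine Finset.sum_congr rfl fun r _ => ?_
    rw [Matrix.mul_apply]
    have : ∀ R : Fin k × Fin d,
        (((1 : Matrix (Fin k) (Fin k) ℂ) ⊗ₖ K r) * M) P R
          = ∑ i, K r P.2 i * M (P.1, i) R := by
      intro R
      rw [Matrix.mul_apply]
      rw [Fintype.sum_prod_type]
      rw [Finset.sum_eq_single P.1]
      · refine Finset.sum_congr rfl fun i _ => ?_
        simp [Matrix.one_apply]
      · intro p' _ hp'
        refine Finset.sum_eq_zero fun i _ => ?_
        simp [Matrix.one_apply, (Ne.symm hp')]
      · intro h; exact absurd (Finset.mem_univ _) h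
    simp only [this]
    rw [Fintype.sum_prod_type]
    rw [Finset.sum_eq_single Q.1]
    · rw [Finset.sum_comm]
      refine Finset.sum_congr rfl fun j _ => ?_
      rw [Finset.sum_mul]
      refine Finset.sum_congr rfl fun i _ => ?_
      simp only [Matrix.conjTranspose_apply, Matrix.kroneckerMap_apply, Matrix.one_apply,
        if_true, one_mul, Complex.star_def]
    · intro q' _ hq'
      refine Finset.sum_eq_zero fun j _ => ?_
      rw [mul_eq_zero]
      right
      simp only [Matrix.conjTranspose_apply, Matrix.kroneckerMap_apply, Matrix.one_apply]
      rw [if_neg (Ne.symm hq')]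
      simp
    · intro h; exact absurd (Finset.mem_univ _) h
  rw [key]
  exact posSemidef_sum _ _ fun r _ => hM.mul_mul_conjTranspose_same _

end Aux

section Aux2

open Complex

/-- An HP linear map commutes with conjTranspose. -/
lemma hp_map_conjTranspose {d : ℕ} {N : Matrix (Fin d) (Fin d) ℂ → Matrix (Fin d) (Fin d) ℂ}
    (hlin : IsLinearMap ℂ N) (hHP : IsHP N) (X : Matrix (Fin d) (Fin d) ℂ) :
    N Xᴴ = (N X)ᴴ := by
  have key : ∀ (A B : Matrix (Fin d) (Fin d) ℂ), A.IsHermitian → B.IsHermitian →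
      N (A + Complex.I • B)ᴴ = (N (A + Complex.I • B))ᴴ := by
    intro A B hA hB
    have hAB : (A + Complex.I • B)ᴴ = A - Complex.I • B := by
      rw [Matrix.conjTranspose_add, Matrix.conjTranspose_smul, hA.eq, hB.eq]
      simp [Complex.star_def, Complex.conj_I, neg_smul, sub_eq_add_neg]
    rw [hAB]
    have hNs : N (A - Complex.I • B) = N A - Complex.I • N B := by
      rw [sub_eq_add_neg, ← neg_smul, hlin.map_add, hlin.map_smul, neg_smul, ← sub_eq_add_neg]
    rw [hNs, hlin.map_add, hlin.map_smul]
    rw [Matrix.conjTranspose_add, Matrix.conjTranspose_smul, (hHP A hA).eq, (hHP B hB).eq]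
    simp [Complex.star_def, Complex.conj_I, neg_smul, sub_eq_add_neg]
  have hA : ((2:ℂ)⁻¹ • (X + Xᴴ)).IsHermitian := by
    unfold Matrix.IsHermitian
    rw [Matrix.conjTranspose_smul, Matrix.conjTranspose_add, Matrix.conjTranspose_conjTranspose,
      add_comm Xᴴ X]
    congr 1
    simp [Complex.star_def, map_inv₀]
  have hB : (((2:ℂ) * Complex.I)⁻¹ • (X - Xᴴ)).IsHermitian := by
    unfold Matrix.IsHermitian
    rw [Matrix.conjTranspose_smul, Matrix.conjTranspose_sub, Matrix.conjTranspose_conjTranspose]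
    have hstar : star (((2:ℂ) * Complex.I)⁻¹) = -((2:ℂ) * Complex.I)⁻¹ := by
      rw [star_inv₀]
      rw [← inv_neg]
      congr 1
      simp [Complex.star_def, Complex.conj_I]
    rw [hstar, neg_smul, ← smul_neg, neg_sub]
  have hX : X = (2:ℂ)⁻¹ • (X + Xᴴ) + Complex.I • (((2:ℂ) * Complex.I)⁻¹ • (X - Xᴴ)) := by
    ext a b
    simp only [Matrix.add_apply, Matrix.smul_apply, Matrix.sub_apply,
      Matrix.conjTranspose_apply, smul_eq_mul]
    have hI : Complex.I * ((2:ℂ) * Complex.I)⁻¹ = (2:ℂ)⁻¹ := by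
      rw [mul_inv, mul_comm (2:ℂ)⁻¹, ← mul_assoc, mul_inv_cancel₀ Complex.I_ne_zero, one_mul]
    rw [← mul_assoc, hI]
    ring
  conv_lhs => rw [hX]
  conv_rhs => rw [hX]
  exact key _ _ hA hB

lemma stdBasisMatrix_conjTranspose {d : ℕ} (i j : Fin d) :
    (Matrix.single i j (1 : ℂ))ᴴ = Matrix.single j i 1 := by
  ext a b
  simp only [Matrix.conjTranspose_apply, Matrix.single, Matrix.of_apply]
  split_ifs with h h' h'
  · simp
  · exact absurd ⟨h.2, h.1⟩ h'
  · exact absurd ⟨h'.2, h'.1⟩ h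
  · simp

/-- The Choi matrix of an HP linear map is Hermitian. -/
lemma choi_hermitian {d : ℕ} {N : Matrix (Fin d) (Fin d) ℂ → Matrix (Fin d) (Fin d) ℂ}
    (hlin : IsLinearMap ℂ N) (hHP : IsHP N) : (choiMatrix N).IsHermitian := by
  unfold Matrix.IsHermitian
  ext P Q
  rw [Matrix.conjTranspose_apply]
  show star (N (Matrix.single Q.1 P.1 1) Q.2 P.2)
    = N (Matrix.single P.1 Q.1 1) P.2 Q.2
  have h : Matrix.single P.1 Q.1 (1:ℂ) = (Matrix.single Q.1 P.1 (1:ℂ))ᴴ :=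
    (stdBasisMatrix_conjTranspose Q.1 P.1).symm
  rw [h, hp_map_conjTranspose hlin hHP, Matrix.conjTranspose_apply]

/-- Quadratic form of a PSD matrix is bounded by trace times norm squared. -/
lemma quad_le_trace {ι : Type*} [Fintype ι] [DecidableEq ι] {A : Matrix ι ι ℂ}
    (hA : A.PosSemidef) (x : ι → ℂ) :
    (star x ⬝ᵥ A *ᵥ x).re ≤ A.trace.re * ∑ p, Complex.normSq (x p) := by
  have hSh : (hA.sqrt).IsHermitian := hA.posSemidef_sqrt.isHermitian
  set S := hA.sqrt with hS
  have hfact : A = Sᴴ * S := by rw [hSh.eq, hA.sqrt_mul_self]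
  have h1 : star x ⬝ᵥ A *ᵥ x = star (S *ᵥ x) ⬝ᵥ (S *ᵥ x) := by
    rw [hfact, ← Matrix.mulVec_mulVec, dotProduct_mulVec, ← Matrix.star_mulVec]
  have h2 : (star x ⬝ᵥ A *ᵥ x).re = ∑ w, Complex.normSq ((S *ᵥ x) w) := by
    rw [h1]
    simp only [dotProduct, Pi.star_apply]
    rw [Complex.re_sum]
    refine Finset.sum_congr rfl fun w _ => ?_
    rw [Complex.star_def, mul_comm, Complex.mul_conj]
    simp
  have h3 : A.trace.re = ∑ w, ∑ p, Complex.normSq (S w p) := by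
    rw [Matrix.trace, Complex.re_sum, Finset.sum_comm]
    refine Finset.sum_congr rfl fun p _ => ?_
    rw [Matrix.diag_apply, psd_rep hA p p, Complex.re_sum]
    refine Finset.sum_congr rfl fun w _ => ?_
    rw [mul_comm, Complex.mul_conj]
    simp [hS]
  rw [h2, h3, Finset.sum_mul]
  refine Finset.sum_le_sum fun w _ => ?_
  have habs : cAbs ((S *ᵥ x) w) ≤ ∑ q, cAbs (S w q) * cAbs (x q) := by
    refine le_trans (cAbs.sum_le _ _) ?_
    refine Finset.sum_le_sum fun q _ => ?_
    rw [_root_.map_mul]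
  have hsq : Complex.normSq ((S *ᵥ x) w)
      ≤ (∑ q, cAbs (S w q) * cAbs (x q))^2 := by
    rw [← cAbs_sq]
    exact pow_le_pow_left₀ (cAbs.nonneg _) habs 2
  refine le_trans hsq ?_
  refine le_trans (Finset.sum_mul_sq_le_sq_mul_sq _ _ _) ?_
  apply le_of_eq
  congr 1
  · exact Finset.sum_congr rfl fun q _ => cAbs_sq _
  · exact Finset.sum_congr rfl fun q _ => cAbs_sq _

lemma diag_sum_eval {d : ℕ} (y : Fin d × Fin d → ℂ) :
    ∑ Q : Fin d × Fin d, (if Q.1 = Q.2 then (1:ℂ) else 0) * y Q = ∑ i : Fin d, y (i, i) := by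
  rw [Fintype.sum_prod_type]
  refine Finset.sum_congr rfl fun j _ => ?_
  simp [ite_mul, Finset.sum_ite_eq]

/-- The Choi matrix of a CP map is PSD. -/
lemma choi_psd_of_cp {d : ℕ} {O : Matrix (Fin d) (Fin d) ℂ → Matrix (Fin d) (Fin d) ℂ}
    (hcp : IsCP O) : (choiMatrix O).PosSemidef := by
  set Ω : Matrix (Fin d × Fin d) (Fin d × Fin d) ℂ :=
    Matrix.of fun P Q => (if P.1 = P.2 then (1:ℂ) else 0) * (if Q.1 = Q.2 then 1 else 0)
    with hΩdef
  have hΩ : Ω.PosSemidef := by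
    apply Matrix.PosSemidef.of_dotProduct_mulVec_nonneg
    · unfold Matrix.IsHermitian
      ext P Q
      simp only [Matrix.conjTranspose_apply, hΩdef, Matrix.of_apply]
      rw [mul_comm]
      simp [apply_ite (starRingEnd ℂ), Complex.star_def]
    · intro y
      have hform : star y ⬝ᵥ Ω *ᵥ y
          = (starRingEnd ℂ) (∑ i : Fin d, y (i, i)) * (∑ i : Fin d, y (i, i)) := by
        have hmv : ∀ P : Fin d × Fin d, (Ω *ᵥ y) P
            = (if P.1 = P.2 then (1:ℂ) else 0) * ∑ i : Fin d, y (i, i) := by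
          intro P
          rw [Matrix.mulVec, dotProduct]
          rw [← diag_sum_eval y, Finset.mul_sum]
          refine Finset.sum_congr rfl fun Q _ => ?_
          simp only [hΩdef, Matrix.of_apply]
          ring
        rw [dotProduct]
        simp only [hmv, Pi.star_apply, Complex.star_def]
        rw [map_sum]
        calc ∑ P : Fin d × Fin d, (starRingEnd ℂ) (y P)
              * ((if P.1 = P.2 then (1:ℂ) else 0) * ∑ i : Fin d, y (i, i))
            = ∑ P : Fin d × Fin d, ((if P.1 = P.2 then (1:ℂ) else 0) * (starRingEnd ℂ) (y P))
              * ∑ i : Fin d, y (i, i) := by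
              refine Finset.sum_congr rfl fun P _ => by ring
          _ = (∑ P : Fin d × Fin d, (if P.1 = P.2 then (1:ℂ) else 0) * (starRingEnd ℂ) (y P))
              * ∑ i : Fin d, y (i, i) := by rw [Finset.sum_mul]
          _ = _ := by rw [diag_sum_eval (fun P => (starRingEnd ℂ) (y P))]
      rw [hform]
      exact star_mul_self_nonneg _
  have hchoi : choiMatrix O = idTensor (Fin d) O Ω := by
    ext P Q
    show O (Matrix.single P.1 Q.1 1) P.2 Q.2
      = O (Matrix.of fun a b => Ω ((P.1, a)) ((Q.1, b))) P.2 Q.2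
    congr 1
    ext a b
    simp only [Matrix.single, Matrix.of_apply, hΩdef]
    split_ifs with h h1 h2 h1 h2 <;> simp_all
  rw [hchoi]
  exact hcp d Ω hΩ

/-- Trace of the Choi matrix of a TP map. -/
lemma choi_trace_of_tp {d : ℕ} {O : Matrix (Fin d) (Fin d) ℂ → Matrix (Fin d) (Fin d) ℂ}
    (hTP : IsTP O) : (choiMatrix O).trace = (d : ℂ) := by
  rw [Matrix.trace, Fintype.sum_prod_type]
  have : ∀ i : Fin d, ∑ a : Fin d, (choiMatrix O).diag (i, a) = (1 : ℂ) := by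
    intro i
    have h1 : ∑ a : Fin d, (choiMatrix O).diag (i, a)
        = (O (Matrix.single i i 1)).trace := by
      rw [Matrix.trace]
      rfl
    rw [h1, hTP, Matrix.trace_single_eq_same]
  simp only [this]
  simp

end Aux2

section Aux3

open Complex

/-- Real nonneg scalar multiple of PSD is PSD. -/
lemma real_smul_psd {ι : Type*} [Fintype ι] {A : Matrix ι ι ℂ} (hA : A.PosSemidef)
    {r : ℝ} (hr : 0 ≤ r) : (((r : ℂ)) • A).PosSemidef := by
  apply Matrix.PosSemidef.of_dotProduct_mulVec_nonneg
  · unfold Matrix.IsHermitian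
    rw [Matrix.conjTranspose_smul, hA.1.eq]
    congr 1
    simp [Complex.star_def]
  · intro x
    rw [Matrix.smul_mulVec, dotProduct_smul]
    rw [smul_eq_mul]
    exact mul_nonneg (by exact_mod_cast Complex.zero_le_real.mpr hr) (hA.dotProduct_mulVec_nonneg x)

/-- Every matrix over an empty index type is PSD. -/
lemma psd_of_isEmpty {ι : Type*} [Fintype ι] [IsEmpty ι] (A : Matrix ι ι ℂ) :
    A.PosSemidef := by
  apply Matrix.PosSemidef.of_dotProduct_mulVec_nonneg
  · unfold Matrix.IsHermitian
    ext i
    exact isEmptyElim i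
  · intro x
    simp [dotProduct, Finset.univ_eq_empty]

/-- In a decomposition of a TP map into TP maps (d > 0), coefficients sum to 1. -/
lemma sum_eta_eq_one {d : ℕ} (hd : 0 < d)
    {N : Matrix (Fin d) (Fin d) ℂ → Matrix (Fin d) (Fin d) ℂ} (hTP : IsTP N)
    {s : ℕ} {η : Fin s → ℝ} {O : Fin s → (Matrix (Fin d) (Fin d) ℂ → Matrix (Fin d) (Fin d) ℂ)}
    (hO : ∀ i, IsCPTP (O i)) (hsum : ∀ X, N X = ∑ i, (η i : ℂ) • O i X) :
    ∑ i, η i = 1 := by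
  set X : Matrix (Fin d) (Fin d) ℂ := Matrix.single ⟨0, hd⟩ ⟨0, hd⟩ 1 with hX
  have htr : (N X).trace = 1 := by
    rw [hTP, hX, Matrix.trace_single_eq_same]
  have h2 : (N X).trace = ∑ i, (η i : ℂ) := by
    rw [hsum X, Matrix.trace_sum]
    refine Finset.sum_congr rfl fun i _ => ?_
    rw [Matrix.trace_smul, (hO i).2.2 X, hX, Matrix.trace_single_eq_same]
    simp
  have h3 : ((∑ i, η i : ℝ) : ℂ) = 1 := by
    push_cast
    rw [← h2, htr]
  exact_mod_cast h3

/-- All decomposition costs are at least 1 (d > 0). -/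
lemma cost_ge_one {d : ℕ} (hd : 0 < d)
    {N : Matrix (Fin d) (Fin d) ℂ → Matrix (Fin d) (Fin d) ℂ} (hTP : IsTP N) :
    ∀ c ∈ decompCosts N, (1:ℝ) ≤ c := by
  rintro c ⟨s, η, O, hO, hsum, rfl⟩
  have h1 : ∑ i, η i = 1 := sum_eta_eq_one hd hTP hO hsum
  calc (1:ℝ) = |∑ i, η i| := by rw [h1]; simp
    _ ≤ ∑ i, |η i| := Finset.abs_sum_le_sum_abs _ _

/-- The depolarizing channel. -/
def depol (d : ℕ) (X : Matrix (Fin d) (Fin d) ℂ) : Matrix (Fin d) (Fin d) ℂ :=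
  X.trace • (((d : ℂ))⁻¹ • (1 : Matrix (Fin d) (Fin d) ℂ))

lemma depol_lin (d : ℕ) : IsLinearMap ℂ (depol d) := by
  constructor
  · intro X Y
    unfold depol
    rw [Matrix.trace_add, add_smul]
  · intro c X
    unfold depol
    rw [Matrix.trace_smul, smul_assoc]

lemma depol_choi (d : ℕ) :
    choiMatrix (depol d) = ((d:ℂ))⁻¹ • (1 : Matrix (Fin d × Fin d) (Fin d × Fin d) ℂ) := by
  ext P Q
  show (depol d (Matrix.single P.1 Q.1 1)) P.2 Q.2 = _
  unfold depol
  rw [Matrix.smul_apply, Matrix.smul_apply, Matrix.smul_apply,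
    smul_eq_mul, smul_eq_mul, smul_eq_mul]
  rcases eq_or_ne P Q with rfl | hPQ
  · rw [Matrix.trace_single_eq_same, Matrix.one_apply_eq, Matrix.one_apply_eq,
      mul_one, one_mul]
  · rw [Matrix.one_apply_ne hPQ, mul_zero]
    rcases eq_or_ne P.1 Q.1 with h1 | h1
    · have h2 : P.2 ≠ Q.2 := fun h2 => hPQ (Prod.ext h1 h2)
      rw [h1, Matrix.trace_single_eq_same, Matrix.one_apply_ne h2]
      simp
    · rw [Matrix.trace_single_eq_of_ne _ _ _ h1]
      simp

lemma depol_cptp {d : ℕ} (hd : 0 < d) : IsCPTP (depol d) := by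
  have hdC : (d : ℂ) ≠ 0 := by exact_mod_cast hd.ne'
  refine ⟨depol_lin d, ?_, ?_⟩
  · apply cp_of_choi_psd (depol_lin d)
    rw [depol_choi d]
    have : ((d:ℂ))⁻¹ = (((d:ℝ)⁻¹ : ℝ) : ℂ) := by push_cast; ring
    rw [this]
    exact real_smul_psd Matrix.PosSemidef.one (by positivity)
  · intro X
    unfold depol
    rw [Matrix.trace_smul, Matrix.trace_smul, Matrix.trace_one, Fintype.card_fin]
    rw [smul_eq_mul, smul_eq_mul]
    field_simp

/-- decomposition costs are nonempty for HPTP maps, d > 0. -/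
lemma decompCosts_nonempty {d : ℕ} (hd : 0 < d)
    {N : Matrix (Fin d) (Fin d) ℂ → Matrix (Fin d) (Fin d) ℂ}
    (hlin : IsLinearMap ℂ N) (hHP : IsHP N) (hTP : IsTP N) :
    (decompCosts N).Nonempty := by
  have hdC : (d : ℂ) ≠ 0 := by exact_mod_cast hd.ne'
  set J := choiMatrix N with hJ
  set C : ℝ := ∑ P : Fin d × Fin d, ∑ Q : Fin d × Fin d, cAbs (J P Q) with hC
  have hC0 : 0 ≤ C := by
    apply Finset.sum_nonneg
    intro P _
    exact Finset.sum_nonneg fun Q _ => cAbs.nonneg _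
  set γ : ℝ := C * d with hγ
  have hγ0 : 0 ≤ γ := mul_nonneg hC0 (by positivity)
  have h1γ : (0:ℝ) < 1 + γ := by linarith
  have h1γC : ((1 + γ : ℝ) : ℂ) ≠ 0 := by
    exact_mod_cast h1γ.ne'
  -- the completed channel
  set O₁ : Matrix (Fin d) (Fin d) ℂ → Matrix (Fin d) (Fin d) ℂ :=
    fun X => (((1 + γ : ℝ) : ℂ))⁻¹ • (N X + (γ : ℂ) • depol d X) with hO₁
  have hO₁lin : IsLinearMap ℂ O₁ := by
    constructor
    · intro X Y
      simp only [hO₁, hlin.map_add, (depol_lin d).map_add]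
      rw [← smul_add]
      congr 1
      rw [smul_add]
      ext a b
      simp only [Matrix.add_apply, Matrix.smul_apply, smul_eq_mul]
      ring
    · intro c X
      simp only [hO₁, hlin.map_smul, (depol_lin d).map_smul]
      ext a b
      simp only [Matrix.add_apply, Matrix.smul_apply, smul_eq_mul]
      ring
  have hSbound : ∀ x : Fin d × Fin d → ℂ,
      cAbs (star x ⬝ᵥ J *ᵥ x) ≤ C * ∑ p, Complex.normSq (x p) := by
    intro x
    set Sx := ∑ p, Complex.normSq (x p) with hSx
    have hSx0 : 0 ≤ Sx := Finset.sum_nonneg fun p _ => Complex.normSq_nonneg _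
    have hterm : ∀ p q : Fin d × Fin d,
        cAbs ((starRingEnd ℂ) (x p) * J p q * x q) ≤ cAbs (J p q) * Sx := by
      intro p q
      rw [_root_.map_mul, _root_.map_mul]
      have h1 : cAbs ((starRingEnd ℂ) (x p)) = cAbs (x p) := by
        simp
      rw [h1]
      have hxp : cAbs (x p) * cAbs (x q) ≤ Sx := by
        have h2 : 2 * (cAbs (x p) * cAbs (x q))
            ≤ cAbs (x p) ^ 2 + cAbs (x q) ^ 2 := by
          have := two_mul_le_add_sq (cAbs (x p)) (cAbs (x q))
          linarith
        have hple : cAbs (x p) ^ 2 ≤ Sx := by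
          rw [cAbs_sq]
          exact Finset.single_le_sum (fun r _ => Complex.normSq_nonneg (x r)) (Finset.mem_univ p)
        have hqle : cAbs (x q) ^ 2 ≤ Sx := by
          rw [cAbs_sq]
          exact Finset.single_le_sum (fun r _ => Complex.normSq_nonneg (x r)) (Finset.mem_univ q)
        linarith
      calc cAbs (x p) * cAbs (J p q) * cAbs (x q)
          = cAbs (J p q) * (cAbs (x p) * cAbs (x q)) := by ring
        _ ≤ cAbs (J p q) * Sx :=
            mul_le_mul_of_nonneg_left hxp (cAbs.nonneg _)
    have hexp : star x ⬝ᵥ J *ᵥ x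
        = ∑ p : Fin d × Fin d, ∑ q : Fin d × Fin d, (starRingEnd ℂ) (x p) * J p q * x q := by
      rw [dotProduct]
      refine Finset.sum_congr rfl fun p _ => ?_
      rw [Matrix.mulVec, dotProduct, Finset.mul_sum]
      refine Finset.sum_congr rfl fun q _ => ?_
      simp only [Pi.star_apply, Complex.star_def]
      ring
    rw [hexp]
    calc cAbs (∑ p : Fin d × Fin d, ∑ q : Fin d × Fin d, (starRingEnd ℂ) (x p) * J p q * x q)
        ≤ ∑ p : Fin d × Fin d, cAbs (∑ q : Fin d × Fin d, (starRingEnd ℂ) (x p) * J p q * x q) :=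
          cAbs.sum_le _ _
      _ ≤ ∑ p : Fin d × Fin d, ∑ q : Fin d × Fin d, cAbs ((starRingEnd ℂ) (x p) * J p q * x q) :=
          Finset.sum_le_sum fun p _ => cAbs.sum_le _ _
      _ ≤ ∑ p : Fin d × Fin d, ∑ q : Fin d × Fin d, cAbs (J p q) * Sx :=
          Finset.sum_le_sum fun p _ => Finset.sum_le_sum fun q _ => hterm p q
      _ = C * Sx := by
          rw [hC, Finset.sum_mul]
          refine Finset.sum_congr rfl fun p _ => ?_
          rw [Finset.sum_mul]
  have hJCpsd : (J + (C : ℂ) • (1 : Matrix (Fin d × Fin d) (Fin d × Fin d) ℂ)).PosSemidef := by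
    have hJh : J.IsHermitian := choi_hermitian hlin hHP
    apply Matrix.PosSemidef.of_dotProduct_mulVec_nonneg
    · unfold Matrix.IsHermitian
      rw [Matrix.conjTranspose_add, Matrix.conjTranspose_smul, hJh.eq, Matrix.conjTranspose_one]
      congr 1
      simp [Complex.star_def]
    · intro x
      rw [Matrix.add_mulVec, dotProduct_add]
      have hone : star x ⬝ᵥ ((C : ℂ) • (1 : Matrix (Fin d × Fin d) (Fin d × Fin d) ℂ)) *ᵥ x
          = ((C * ∑ p, Complex.normSq (x p) : ℝ) : ℂ) := by
        rw [Matrix.smul_mulVec, dotProduct_smul, Matrix.one_mulVec]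
        rw [smul_eq_mul]
        push_cast
        congr 1
        rw [dotProduct]
        refine Finset.sum_congr rfl fun p _ => ?_
        simp only [Pi.star_apply, Complex.star_def]
        rw [mul_comm, Complex.mul_conj]
      rw [hone]
      have hzre := herm_quad_real hJh x
      set z := star x ⬝ᵥ J *ᵥ x with hz
      rw [hzre]
      rw [← Complex.ofReal_add]
      rw [Complex.zero_le_real]
      have habs := hSbound x
      rw [← hz, hzre] at habs
      rw [cAbs_ofReal] at habs
      have : -(C * ∑ p, Complex.normSq (x p)) ≤ z.re := by
        rcases abs_le.mp habs with ⟨h, _⟩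
        linarith
      linarith
  have hO₁choi : choiMatrix O₁
      = (((1 + γ : ℝ) : ℂ))⁻¹ • (J + (C : ℂ) • (1 : Matrix (Fin d × Fin d) (Fin d × Fin d) ℂ)) := by
    have hscalar : (γ : ℂ) * ((d:ℂ))⁻¹ = (C : ℂ) := by
      rw [hγ]
      push_cast
      field_simp
    ext P Q
    have hshow : choiMatrix O₁ P Q = O₁ (Matrix.single P.1 Q.1 1) P.2 Q.2 := rfl
    rw [hshow, hO₁]
    simp only [Matrix.smul_apply, Matrix.add_apply, smul_eq_mul]
    congr 1
    have hD : depol d (Matrix.single P.1 Q.1 1) P.2 Q.2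
        = ((d:ℂ))⁻¹ * (1 : Matrix (Fin d × Fin d) (Fin d × Fin d) ℂ) P Q := by
      have h' : choiMatrix (depol d) P Q
          = (((d:ℂ))⁻¹ • (1 : Matrix (Fin d × Fin d) (Fin d × Fin d) ℂ)) P Q := by
        rw [depol_choi d]
      rw [Matrix.smul_apply, smul_eq_mul] at h'
      exact h'
    have hchoiN : N (Matrix.single P.1 Q.1 1) P.2 Q.2 = J P Q := rfl
    rw [hchoiN, hD]
    congr 1
    rw [← mul_assoc, hscalar]
  have hO₁cp : IsCP O₁ := by
    apply cp_of_choi_psd hO₁lin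
    rw [hO₁choi]
    have : (((1 + γ : ℝ) : ℂ))⁻¹ = ((((1 + γ)⁻¹ : ℝ)) : ℂ) := by push_cast; ring
    rw [this]
    exact real_smul_psd hJCpsd (by positivity)
  have hO₁tp : IsTP O₁ := by
    intro X
    rw [hO₁]
    simp only
    rw [Matrix.trace_smul, Matrix.trace_add, Matrix.trace_smul, hTP, (depol_cptp hd).2.2 X]
    rw [smul_eq_mul, smul_eq_mul]
    field_simp
    push_cast
    ring
  refine ⟨(1 + γ) + γ, 2, ![1 + γ, -γ], ![O₁, depol d], ?_, ?_, ?_⟩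
  · intro i
    fin_cases i
    · exact ⟨hO₁lin, hO₁cp, hO₁tp⟩
    · exact depol_cptp hd
  · intro X
    rw [Fin.sum_univ_two]
    simp only [Matrix.cons_val_zero, Matrix.cons_val_one, Matrix.head_cons]
    rw [hO₁]
    simp only
    rw [smul_smul]
    push_cast
    rw [mul_inv_cancel₀ (by push_cast at h1γC ⊢; exact h1γC), one_smul]
    rw [neg_smul, add_neg_cancel_right]
  · rw [Fin.sum_univ_two]
    simp only [Matrix.cons_val_zero, Matrix.cons_val_one, Matrix.head_cons]
    rw [abs_of_pos h1γ, abs_neg, _root_.abs_of_nonneg hγ0]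

end Aux3

section Aux4

open Complex

lemma quad_sum {ι κ : Type*} [Fintype ι] [Fintype κ] (c : ι → ℂ) (A : ι → Matrix κ κ ℂ)
    (x : κ → ℂ) :
    star x ⬝ᵥ (∑ i, c i • A i) *ᵥ x = ∑ i, c i * (star x ⬝ᵥ A i *ᵥ x) := by
  rw [dotProduct]
  have hmv : ∀ p, ((∑ i, c i • A i) *ᵥ x) p = ∑ i, c i * ((A i *ᵥ x) p) := by
    intro p
    rw [Matrix.mulVec, dotProduct]
    simp only [Matrix.sum_apply, Matrix.smul_apply, smul_eq_mul, Finset.sum_mul]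
    rw [Finset.sum_comm]
    refine Finset.sum_congr rfl fun i _ => ?_
    rw [Matrix.mulVec, dotProduct, Finset.mul_sum]
    exact Finset.sum_congr rfl fun q _ => by ring
  calc ∑ p, star x p * ((∑ i, c i • A i) *ᵥ x) p
      = ∑ p, ∑ i, c i * (star x p * ((A i *ᵥ x) p)) := by
        refine Finset.sum_congr rfl fun p _ => ?_
        rw [hmv p, Finset.mul_sum]
        refine Finset.sum_congr rfl fun i _ => by ring
    _ = ∑ i, ∑ p, c i * (star x p * ((A i *ᵥ x) p)) := Finset.sum_comm
    _ = ∑ i, c i * (star x ⬝ᵥ A i *ᵥ x) := by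
        refine Finset.sum_congr rfl fun i _ => ?_
        rw [dotProduct, Finset.mul_sum]

lemma choi_decomp {d s : ℕ}
    {N : Matrix (Fin d) (Fin d) ℂ → Matrix (Fin d) (Fin d) ℂ}
    (η : Fin s → ℝ) (O : Fin s → (Matrix (Fin d) (Fin d) ℂ → Matrix (Fin d) (Fin d) ℂ))
    (hsum : ∀ X, N X = ∑ i, (η i : ℂ) • O i X) :
    choiMatrix N = ∑ i, (η i : ℂ) • choiMatrix (O i) := by
  ext P Q
  have h1 : choiMatrix N P Q = N (Matrix.single P.1 Q.1 1) P.2 Q.2 := rfl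
  rw [h1, hsum]
  simp [Matrix.sum_apply, Matrix.smul_apply, choiMatrix]

end Aux4

/-- faithfulness: an HPTP map has `ν(N) = 0` iff it is CPTP. -/
theorem nu_eq_zero_iff_cptp {d : ℕ}
    (N : Matrix (Fin d) (Fin d) ℂ → Matrix (Fin d) (Fin d) ℂ)
    (hlin : IsLinearMap ℂ N) (hHP : IsHP N) (hTP : IsTP N) :
    nu N = 0 ↔ IsCPTP N := by
  constructor
  · intro hnu
    rcases Nat.eq_zero_or_pos d with hd0 | hd
    · subst hd0
      exact ⟨hlin, fun k M hM => psd_of_isEmpty _, hTP⟩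
    · have hne := decompCosts_nonempty hd hlin hHP hTP
      have hlb := cost_ge_one hd hTP
      have hge : 1 ≤ sInf (decompCosts N) := le_csInf hne hlb
      have hinf1 : sInf (decompCosts N) = 1 := by
        unfold nu at hnu
        rcases Real.logb_eq_zero.mp hnu with h|h|h|h|h|h
        · norm_num at h
        · norm_num at h
        · norm_num at h
        · linarith
        · exact h
        · linarith
      refine ⟨hlin, ?_, hTP⟩
      apply cp_of_choi_psd hlin
      refine Matrix.PosSemidef.of_dotProduct_mulVec_nonneg (choi_hermitian hlin hHP) ?_
      intro x
      set z := star x ⬝ᵥ choiMatrix N *ᵥ x with hz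
      have hzre : z = ((z.re : ℝ) : ℂ) := herm_quad_real (choi_hermitian hlin hHP) x
      rcases lt_or_ge z.re 0 with hzre_neg | hge0
      swap
      · exact hzre ▸ Complex.zero_le_real.mpr hge0
      exfalso
      set Sx := ∑ p, Complex.normSq (x p) with hSx
      have hSx0 : 0 ≤ Sx := Finset.sum_nonneg fun p _ => Complex.normSq_nonneg _
      have hSxpos : 0 < Sx := by
        rcases hSx0.lt_or_eq with h | h
        · exact h
        · exfalso
          have hx0 : ∀ p, x p = 0 := by
            intro p
            have h' := (Finset.sum_eq_zero_iff_of_nonneg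
              (fun p _ => Complex.normSq_nonneg (x p))).mp h.symm p (Finset.mem_univ p)
            exact Complex.normSq_eq_zero.mp h'
          have hxf : x = 0 := funext hx0
          have hz0 : z = 0 := by rw [hz, hxf]; simp
          rw [hz0] at hzre_neg
          simp at hzre_neg
      set B := (d : ℝ) * Sx with hB
      have hBpos : 0 < B := mul_pos (by exact_mod_cast hd) hSxpos
      set ε := -z.re with hε
      have hεpos : 0 < ε := by rw [hε]; linarith
      have hclaim : ∀ c ∈ decompCosts N, 1 + 2 * (ε / B) ≤ c := by
        rintro c ⟨s, η, O, hO, hsum, rfl⟩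
        have hchoiN : choiMatrix N = ∑ i, (η i : ℂ) • choiMatrix (O i) :=
          choi_decomp η O hsum
        set t : Fin s → ℝ := fun i => (star x ⬝ᵥ choiMatrix (O i) *ᵥ x).re with ht
        have ht0 : ∀ i, 0 ≤ t i := by
          intro i
          have := (choi_psd_of_cp (hO i).2.1).dotProduct_mulVec_nonneg x
          exact (Complex.le_def.mp this).1
        have htB : ∀ i, t i ≤ B := by
          intro i
          have h1 := quad_le_trace (choi_psd_of_cp (hO i).2.1) x
          rw [choi_trace_of_tp (hO i).2.2] at h1
          simpa [hB, hSx] using h1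
        have hz_eq : z.re = ∑ i, η i * t i := by
          have h1 : z = ∑ i, (η i : ℂ) * (star x ⬝ᵥ choiMatrix (O i) *ᵥ x) := by
            rw [hz, hchoiN, quad_sum]
          have h2 : ∀ i, star x ⬝ᵥ choiMatrix (O i) *ᵥ x = ((t i : ℝ) : ℂ) := fun i =>
            herm_quad_real (choi_psd_of_cp (hO i).2.1).1 x
          rw [h1]
          simp only [h2]
          rw [Complex.re_sum]
          refine Finset.sum_congr rfl fun i _ => ?_
          rw [← Complex.ofReal_mul, Complex.ofReal_re]
        have hsum1 : ∑ i, η i = 1 := sum_eta_eq_one hd hTP hO hsum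
        have hP : ε ≤ B * ∑ i, max (-η i) 0 := by
          have he1 : ε = ∑ i, (-η i) * t i := by
            rw [hε, hz_eq, ← Finset.sum_neg_distrib]
            refine Finset.sum_congr rfl fun i _ => by ring
          rw [he1]
          calc ∑ i, (-η i) * t i ≤ ∑ i, max (-η i) 0 * B := by
                refine Finset.sum_le_sum fun i _ => ?_
                rcases le_or_gt (η i) 0 with h | h
                · rw [max_eq_left (by linarith)]
                  exact mul_le_mul_of_nonneg_left (htB i) (by linarith)
                · rw [max_eq_right (by linarith)]
                  rw [zero_mul]
                  exact mul_nonpos_of_nonpos_of_nonneg (by linarith) (ht0 i)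
            _ = B * ∑ i, max (-η i) 0 := by
                rw [← Finset.sum_mul, mul_comm]
        have habs_eta : ∀ i, |η i| = η i + 2 * max (-η i) 0 := by
          intro i
          rcases le_or_gt 0 (η i) with h | h
          · rw [abs_of_nonneg h, max_eq_right (by linarith)]
            ring
          · rw [abs_of_neg h, max_eq_left (by linarith)]
            ring
        calc 1 + 2 * (ε / B)
            ≤ 1 + 2 * ∑ i, max (-η i) 0 := by
              have hdb : ε / B ≤ ∑ i, max (-η i) 0 := by
                rw [div_le_iff₀ hBpos]
                calc ε ≤ B * ∑ i, max (-η i) 0 := hP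
                  _ = (∑ i, max (-η i) 0) * B := mul_comm _ _
              linarith
          _ = ∑ i, η i + 2 * ∑ i, max (-η i) 0 := by rw [hsum1]
          _ = ∑ i, (η i + 2 * max (-η i) 0) := by
              rw [Finset.sum_add_distrib, Finset.mul_sum]
          _ = ∑ i, |η i| := Finset.sum_congr rfl fun i _ => (habs_eta i).symm
      have hge2 : 1 + 2 * (ε / B) ≤ sInf (decompCosts N) := le_csInf hne hclaim
      rw [hinf1] at hge2
      have hdiv : 0 < ε / B := div_pos hεpos hBpos
      linarith
  · intro hcptp
    rcases Nat.eq_zero_or_pos d with hd0 | hd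
    · subst hd0
      have hmem : (0 : ℝ) ∈ decompCosts N := by
        refine ⟨0, fun i => i.elim0, fun i => i.elim0, fun i => i.elim0, ?_, by simp⟩
        intro X
        ext i j
        exact i.elim0
      have hlb : ∀ c ∈ decompCosts N, (0 : ℝ) ≤ c := by
        rintro c ⟨s, η, O, hO, hsum, rfl⟩
        exact Finset.sum_nonneg fun i _ => abs_nonneg _
      have hinf : sInf (decompCosts N) = 0 :=
        le_antisymm (csInf_le ⟨0, hlb⟩ hmem) (le_csInf ⟨0, hmem⟩ hlb)
      unfold nu
      rw [hinf, Real.logb_zero]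
    · have hmem : (1 : ℝ) ∈ decompCosts N := by
        refine ⟨1, ![1], ![N], ?_, ?_, ?_⟩
        · intro i
          fin_cases i
          exact hcptp
        · intro X
          rw [Fin.sum_univ_one]
          simp
        · rw [Fin.sum_univ_one]
          simp
      have hlb := cost_ge_one hd hTP
      have hinf : sInf (decompCosts N) = 1 :=
        le_antisymm (csInf_le ⟨1, hlb⟩ hmem) (le_csInf ⟨1, hmem⟩ hlb)
      unfold nu
      rw [hinf, Real.logb_one]

end
end

section
/- Let y ∈ [0,1) and N ∈ [0,1], and let A_{y,N} be the generalized amplitude damping channel on M₂(ℂ) with Kraus operators A₁ = √(1−N)(|0⟩⟨0| + √(1−y)|1⟩⟨1|), A₂ = √(y(1−N)) |0⟩⟨1|, A₃ = √N(√(1−y)|0⟩⟨0| + |1⟩⟨1|), A₄ = √(yN) |1⟩⟨0|, i.e., A_{y,N}(ρ) = ∑_{k=1}^{4} A_k ρ A_k†. Then A_{y,N} is invertible as a linear map on M₂(ℂ) and 2^{ν(A_{y,N}⁻¹)} = (1 + |y − 2Ny|)/(1 − y). -/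
open scoped Kronecker ComplexOrder
open Matrix

noncomputable section

/-- The generalized amplitude damping channel with parameters `y, N`. -/
def gadChannel (y nN : ℝ) (X : Matrix (Fin 2) (Fin 2) ℂ) : Matrix (Fin 2) (Fin 2) ℂ :=
  ((Real.sqrt (1 - nN) : ℂ) • !![1, 0; 0, (Real.sqrt (1 - y) : ℂ)]) * X *
    ((Real.sqrt (1 - nN) : ℂ) • !![1, 0; 0, (Real.sqrt (1 - y) : ℂ)])ᴴ +
  !![0, (Real.sqrt (y * (1 - nN)) : ℂ); 0, 0] * X *
    !![0, (Real.sqrt (y * (1 - nN)) : ℂ); 0, 0]ᴴ +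
  ((Real.sqrt nN : ℂ) • !![(Real.sqrt (1 - y) : ℂ), 0; 0, 1]) * X *
    ((Real.sqrt nN : ℂ) • !![(Real.sqrt (1 - y) : ℂ), 0; 0, 1])ᴴ +
  !![0, 0; (Real.sqrt (y * nN) : ℂ), 0] * X * !![0, 0; (Real.sqrt (y * nN) : ℂ), 0]ᴴ


/-! ### Auxiliary machinery -/

/-- A map given by Kraus operators. -/
def krausMap {n m : Type*} [Fintype n] (r : ℕ) (K : Fin r → Matrix m n ℂ)
    (X : Matrix n n ℂ) : Matrix m m ℂ := ∑ i, K i * X * (K i)ᴴ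

theorem isCPTP_krausMap {n m : Type*} [Fintype n] [Fintype m] [DecidableEq n] [DecidableEq m]
    (r : ℕ) (K : Fin r → Matrix m n ℂ) (hK : ∑ i, (K i)ᴴ * (K i) = 1) :
    IsCPTP (krausMap r K) := by
  refine ⟨⟨fun X Y => ?_, fun c X => ?_⟩, fun k M hM => ?_, fun X => ?_⟩
  · simp [krausMap, Matrix.mul_add, Matrix.add_mul, Finset.sum_add_distrib]
  · simp [krausMap, Matrix.mul_smul, Matrix.smul_mul, Finset.smul_sum]
  · have h : idTensor (Fin k) (krausMap r K) M
        = ∑ i, ((1 : Matrix (Fin k) (Fin k) ℂ) ⊗ₖ K i) * M *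
            ((1 : Matrix (Fin k) (Fin k) ℂ) ⊗ₖ K i)ᴴ := by
      ext p q
      simp only [idTensor, krausMap, Matrix.sum_apply, Matrix.of_apply, Matrix.mul_apply,
        Matrix.conjTranspose_apply, Matrix.kroneckerMap_apply, Fintype.sum_prod_type,
        Matrix.one_apply, star_one, star_zero, apply_ite (star : ℂ → ℂ), mul_ite, ite_mul,
        zero_mul, mul_zero, one_mul, mul_one, Finset.sum_ite_irrel, Finset.sum_const_zero,
        Finset.sum_ite_eq, Finset.mem_univ, if_true]
    rw [h]
    exact Finset.sum_induction _ _ (fun a b ha hb => ha.add hb) Matrix.PosSemidef.zero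
      (fun i _ => hM.mul_mul_conjTranspose_same _)
  · simp only [krausMap, Matrix.trace_sum]
    calc ∑ i, ((K i) * X * (K i)ᴴ).trace = ∑ i, ((K i)ᴴ * (K i) * X).trace := by
          refine Finset.sum_congr rfl fun i _ => ?_
          rw [Matrix.trace_mul_cycle]
      _ = ((∑ i, (K i)ᴴ * (K i)) * X).trace := by rw [Finset.sum_mul, Matrix.trace_sum]
      _ = X.trace := by rw [hK, one_mul]

lemma isCP_posSemidef {n m : Type*} [Fintype n] [Fintype m]
    {O : Matrix n n ℂ → Matrix m m ℂ} (hO : IsCP O)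
    {ρ : Matrix n n ℂ} (hρ : ρ.PosSemidef) : (O ρ).PosSemidef := by
  have hM : ((ρ.submatrix Prod.snd Prod.snd : Matrix (Fin 1 × n) (Fin 1 × n) ℂ)).PosSemidef :=
    hρ.submatrix _
  have h := hO 1 _ hM
  have key : O ρ = (idTensor (Fin 1) O (ρ.submatrix Prod.snd Prod.snd)).submatrix
      (fun p => ((0 : Fin 1), p)) (fun q => ((0 : Fin 1), q)) := rfl
  rw [key]
  exact h.submatrix _

lemma posSemidef_diag_re {n : Type*} [Fintype n] [DecidableEq n]
    {A : Matrix n n ℂ} (hA : A.PosSemidef) (i : n) : 0 ≤ (A i i).re ∧ (A i i).im = 0 := by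
  have h := hA.diag_nonneg (i := i)
  rw [Complex.le_def] at h
  simp only [Complex.zero_re, Complex.zero_im] at h
  exact ⟨h.1, h.2.symm⟩

lemma psd_stdBasis (j : Fin 2) : (Matrix.single j j (1 : ℂ)).PosSemidef := by
  have h : Matrix.single j j (1 : ℂ)
      = (Matrix.single j j (1 : ℂ))ᴴ * Matrix.single j j (1 : ℂ) := by
    ext a b
    fin_cases j <;> fin_cases a <;> fin_cases b <;>
      simp [Matrix.mul_apply, Fin.sum_univ_two, Matrix.single,
        Matrix.conjTranspose_apply]
  rw [h]
  exact Matrix.posSemidef_conjTranspose_mul_self _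

lemma trace_stdBasis (j : Fin 2) : (Matrix.single j j (1 : ℂ)).trace = 1 := by
  fin_cases j <;>
    simp [Matrix.trace, Matrix.diag, Fin.sum_univ_two, Matrix.single]

/-- The key lower bound on decomposition costs: witness functional given by two diagonal
entries of the image of a standard basis state. -/
lemma lower_aux (Nmap : Matrix (Fin 2) (Fin 2) ℂ → Matrix (Fin 2) (Fin 2) ℂ)
    (j k : Fin 2) (hjk : j ≠ k) (c₀ : ℝ)
    (hval : ((Nmap (Matrix.single j j 1)) j j).re
      - ((Nmap (Matrix.single j j 1)) k k).re = c₀) :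
    ∀ c ∈ decompCosts Nmap, c₀ ≤ c := by
  rintro c ⟨s, η, O, hO, hdec, rfl⟩
  set E := Matrix.single j j (1 : ℂ) with hE
  have hEpsd : E.PosSemidef := psd_stdBasis j
  have huniv : (Finset.univ : Finset (Fin 2)) = {j, k} := by
    fin_cases j <;> fin_cases k <;> simp_all <;> decide
  have key : ∀ i, |((O i E) j j).re - ((O i E) k k).re| ≤ 1 := by
    intro i
    have hpsd : (O i E).PosSemidef := isCP_posSemidef (hO i).2.1 hEpsd
    have htr : (O i E).trace = 1 := by rw [(hO i).2.2 E, hE, trace_stdBasis]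
    have hsum : ((O i E) j j).re + ((O i E) k k).re = 1 := by
      have h2 : (O i E).trace = (O i E) j j + (O i E) k k := by
        simp only [Matrix.trace, Matrix.diag]
        rw [huniv, Finset.sum_insert (by simp [hjk]), Finset.sum_singleton]
      rw [h2] at htr
      have := congrArg Complex.re htr
      simpa using this
    have h1 := (posSemidef_diag_re hpsd j).1
    have h2 := (posSemidef_diag_re hpsd k).1
    rw [abs_le]
    constructor <;> nlinarith
  have hsum_eq : c₀ = ∑ i, η i * (((O i E) j j).re - ((O i E) k k).re) := by
    have hj : ((Nmap E) j j).re = ∑ i, η i * ((O i E) j j).re := by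
      rw [hdec E]
      simp [Matrix.sum_apply, Matrix.smul_apply, smul_eq_mul, Complex.re_sum,
        Complex.re_ofReal_mul]
    have hk2 : ((Nmap E) k k).re = ∑ i, η i * ((O i E) k k).re := by
      rw [hdec E]
      simp [Matrix.sum_apply, Matrix.smul_apply, smul_eq_mul, Complex.re_sum,
        Complex.re_ofReal_mul]
    rw [← hval, hj, hk2, ← Finset.sum_sub_distrib]
    exact Finset.sum_congr rfl fun i _ => by ring
  rw [hsum_eq]
  refine Finset.sum_le_sum fun i _ => ?_
  refine le_trans (le_abs_self _) ?_
  rw [abs_mul]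
  exact mul_le_of_le_one_right (abs_nonneg _) (key i)

/-- The explicit inverse of the generalized amplitude damping channel. -/
def ainvMap (y nN : ℝ) (X : Matrix (Fin 2) (Fin 2) ℂ) : Matrix (Fin 2) (Fin 2) ℂ :=
  !![(((1 - y + nN * y) / (1 - y) : ℝ) : ℂ) * X 0 0
      - (((y * (1 - nN)) / (1 - y) : ℝ) : ℂ) * X 1 1,
     (((Real.sqrt (1 - y))⁻¹ : ℝ) : ℂ) * X 0 1;
     (((Real.sqrt (1 - y))⁻¹ : ℝ) : ℂ) * X 1 0,
     -(((y * nN) / (1 - y) : ℝ) : ℂ) * X 0 0 + (((1 - nN * y) / (1 - y) : ℝ) : ℂ) * X 1 1]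

lemma ainv_linear (y nN : ℝ) : IsLinearMap ℂ (ainvMap y nN) := by
  constructor
  · intro X Y
    ext i j
    fin_cases i <;> fin_cases j <;> simp [ainvMap] <;> ring
  · intro c X
    ext i j
    fin_cases i <;> fin_cases j <;> simp [ainvMap, Matrix.smul_apply, smul_eq_mul] <;> ring

lemma gad_apply (y nN : ℝ) (hy0 : 0 ≤ y) (hy1 : y < 1) (hN0 : 0 ≤ nN) (hN1 : nN ≤ 1)
    (X : Matrix (Fin 2) (Fin 2) ℂ) :
    gadChannel y nN X
      = !![(((1 - nN * y) : ℝ) : ℂ) * X 0 0 + (((y * (1 - nN)) : ℝ) : ℂ) * X 1 1,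
           ((Real.sqrt (1 - y) : ℝ) : ℂ) * X 0 1;
           ((Real.sqrt (1 - y) : ℝ) : ℂ) * X 1 0,
           (((y * nN) : ℝ) : ℂ) * X 0 0 + (((1 - y + nN * y) : ℝ) : ℂ) * X 1 1] := by
  have h1 : (Real.sqrt (1 - nN) : ℂ) * (Real.sqrt (1 - nN) : ℂ) = 1 - (nN : ℂ) := by
    rw [← Complex.ofReal_mul, Real.mul_self_sqrt (by linarith)]; push_cast; ring
  have h2 : (Real.sqrt (1 - y) : ℂ) * (Real.sqrt (1 - y) : ℂ) = 1 - (y : ℂ) := by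
    rw [← Complex.ofReal_mul, Real.mul_self_sqrt (by linarith)]; push_cast; ring
  have h3 : (Real.sqrt (y * (1 - nN)) : ℂ) * (Real.sqrt (y * (1 - nN)) : ℂ)
      = (y : ℂ) * (1 - (nN : ℂ)) := by
    rw [← Complex.ofReal_mul, Real.mul_self_sqrt (by nlinarith)]; push_cast; ring
  have h4 : (Real.sqrt nN : ℂ) * (Real.sqrt nN : ℂ) = (nN : ℂ) := by
    rw [← Complex.ofReal_mul, Real.mul_self_sqrt hN0]
  have h5 : (Real.sqrt (y * nN) : ℂ) * (Real.sqrt (y * nN) : ℂ) = (y : ℂ) * (nN : ℂ) := by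
    rw [← Complex.ofReal_mul, Real.mul_self_sqrt (by nlinarith)]; push_cast; ring
  ext i j
  fin_cases i <;> fin_cases j <;>
    simp [gadChannel, Matrix.mul_apply, Matrix.vecMul, dotProduct, Fin.sum_univ_two,
      Matrix.conjTranspose_apply, Matrix.smul_apply, smul_eq_mul, Complex.star_def,
      Complex.conj_ofReal] <;>
    push_cast
  · linear_combination (X 0 0) * h1 + (X 0 0) * ((Real.sqrt (1-y) : ℂ) * (Real.sqrt (1-y) : ℂ)) * h4
      + (X 0 0) * (nN : ℂ) * h2 + (X 1 1) * h3
  · linear_combination (X 0 1) * (Real.sqrt (1-y) : ℂ) * h1 + (X 0 1) * (Real.sqrt (1-y) : ℂ) * h4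
  · linear_combination (X 1 0) * (Real.sqrt (1-y) : ℂ) * h1 + (X 1 0) * (Real.sqrt (1-y) : ℂ) * h4
  · linear_combination (X 1 1) * ((Real.sqrt (1-y) : ℂ) * (Real.sqrt (1-y) : ℂ)) * h1
      + (X 1 1) * h4 + (X 1 1) * (1 - (nN:ℂ)) * h2 + (X 0 0) * h5

lemma ainv_gad (y nN : ℝ) (hy0 : 0 ≤ y) (hy1 : y < 1) (hN0 : 0 ≤ nN) (hN1 : nN ≤ 1)
    (X : Matrix (Fin 2) (Fin 2) ℂ) : ainvMap y nN (gadChannel y nN X) = X := by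
  have hy : ((1 - y : ℝ) : ℂ) ≠ 0 := by
    simpa using Complex.ofReal_ne_zero.mpr (by linarith : (1 - y : ℝ) ≠ 0)
  have hs : (Real.sqrt (1 - y) : ℂ) ≠ 0 := by
    simpa using Complex.ofReal_ne_zero.mpr
      (ne_of_gt (Real.sqrt_pos.mpr (by linarith : (0:ℝ) < 1 - y)))
  have hy' : (1 : ℂ) - (y : ℂ) ≠ 0 := by
    intro h
    have := congrArg Complex.re h
    simp at this
    linarith
  rw [gad_apply y nN hy0 hy1 hN0 hN1]
  ext i j
  fin_cases i <;> fin_cases j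
  · simp only [ainvMap]
    simp
    push_cast
    field_simp
    ring
  · simp only [ainvMap]
    simp
    push_cast
    rw [← mul_assoc, inv_mul_cancel₀ (by push_cast at hs ⊢; exact hs), one_mul]
  · simp only [ainvMap]
    simp
    push_cast
    rw [← mul_assoc, inv_mul_cancel₀ (by push_cast at hs ⊢; exact hs), one_mul]
  · simp only [ainvMap]
    simp
    push_cast
    field_simp
    ring


/-! ### The two CPTP maps used in the optimal decomposition -/

def zMat : Matrix (Fin 2) (Fin 2) ℂ := !![1, 0; 0, -1]

def dephKraus (a b : ℝ) : Fin 2 → Matrix (Fin 2) (Fin 2) ℂ :=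
  ![(Real.sqrt a : ℂ) • (1 : Matrix (Fin 2) (Fin 2) ℂ), (Real.sqrt b : ℂ) • zMat]

lemma dephKraus_sum (a b : ℝ) (ha : 0 ≤ a) (hb : 0 ≤ b) (hab : a + b = 1) :
    ∑ i, (dephKraus a b i)ᴴ * (dephKraus a b i) = 1 := by
  have h1 : (Real.sqrt a : ℂ) * (Real.sqrt a : ℂ) = (a : ℂ) := by
    rw [← Complex.ofReal_mul, Real.mul_self_sqrt ha]
  have h2 : (Real.sqrt b : ℂ) * (Real.sqrt b : ℂ) = (b : ℂ) := by
    rw [← Complex.ofReal_mul, Real.mul_self_sqrt hb]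
  ext i j
  fin_cases i <;> fin_cases j <;>
    simp [dephKraus, zMat, Fin.sum_univ_two, Matrix.mul_apply, Matrix.conjTranspose_apply,
      Matrix.one_apply, Matrix.smul_apply, smul_eq_mul, Complex.star_def,
      Complex.conj_ofReal, h1, h2] <;>
    push_cast <;> exact_mod_cast hab

lemma dephKraus_apply (a b s' : ℝ) (ha : 0 ≤ a) (hb : 0 ≤ b) (hab : a + b = 1)
    (hd : a - b = s') (X : Matrix (Fin 2) (Fin 2) ℂ) :
    krausMap 2 (dephKraus a b) X
      = !![X 0 0, (s' : ℂ) * X 0 1; (s' : ℂ) * X 1 0, X 1 1] := by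
  have h1 : (Real.sqrt a : ℂ) * (Real.sqrt a : ℂ) = (a : ℂ) := by
    rw [← Complex.ofReal_mul, Real.mul_self_sqrt ha]
  have h2 : (Real.sqrt b : ℂ) * (Real.sqrt b : ℂ) = (b : ℂ) := by
    rw [← Complex.ofReal_mul, Real.mul_self_sqrt hb]
  have habc : (a : ℂ) + (b : ℂ) = 1 := by exact_mod_cast hab
  have hdc : (a : ℂ) - (b : ℂ) = (s' : ℂ) := by exact_mod_cast hd
  ext i j
  fin_cases i <;> fin_cases j <;>
    simp [krausMap, dephKraus, zMat, Fin.sum_univ_two, Matrix.mul_apply, Matrix.vecMul,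
      dotProduct, Matrix.conjTranspose_apply, Matrix.one_apply, Matrix.smul_apply,
      smul_eq_mul, Complex.star_def, Complex.conj_ofReal]
  · linear_combination (X 0 0) * h1 + (X 0 0) * h2 + (X 0 0) * habc
  · linear_combination (X 0 1) * h1 - (X 0 1) * h2 + (X 0 1) * hdc
  · linear_combination (X 1 0) * h1 - (X 1 0) * h2 + (X 1 0) * hdc
  · linear_combination (X 1 1) * h1 + (X 1 1) * h2 + (X 1 1) * habc

def diagKraus (b₁ b₂ b₃ b₄ : ℝ) : Fin 4 → Matrix (Fin 2) (Fin 2) ℂ :=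
  ![!![(Real.sqrt b₁ : ℂ), 0; 0, 0], !![0, 0; (Real.sqrt b₂ : ℂ), 0],
    !![0, (Real.sqrt b₃ : ℂ); 0, 0], !![0, 0; 0, (Real.sqrt b₄ : ℂ)]]

lemma diagKraus_sum (b₁ b₂ b₃ b₄ : ℝ) (h₁ : 0 ≤ b₁) (h₂ : 0 ≤ b₂) (h₃ : 0 ≤ b₃)
    (h₄ : 0 ≤ b₄) (h12 : b₁ + b₂ = 1) (h34 : b₃ + b₄ = 1) :
    ∑ i, (diagKraus b₁ b₂ b₃ b₄ i)ᴴ * (diagKraus b₁ b₂ b₃ b₄ i) = 1 := by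
  have e₁ : (Real.sqrt b₁ : ℂ) * (Real.sqrt b₁ : ℂ) = (b₁ : ℂ) := by
    rw [← Complex.ofReal_mul, Real.mul_self_sqrt h₁]
  have e₂ : (Real.sqrt b₂ : ℂ) * (Real.sqrt b₂ : ℂ) = (b₂ : ℂ) := by
    rw [← Complex.ofReal_mul, Real.mul_self_sqrt h₂]
  have e₃ : (Real.sqrt b₃ : ℂ) * (Real.sqrt b₃ : ℂ) = (b₃ : ℂ) := by
    rw [← Complex.ofReal_mul, Real.mul_self_sqrt h₃]
  have e₄ : (Real.sqrt b₄ : ℂ) * (Real.sqrt b₄ : ℂ) = (b₄ : ℂ) := by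
    rw [← Complex.ofReal_mul, Real.mul_self_sqrt h₄]
  ext i j
  fin_cases i <;> fin_cases j <;>
    simp [diagKraus, Fin.sum_univ_four, Matrix.mul_apply, Fin.sum_univ_two,
      Matrix.conjTranspose_apply, Matrix.one_apply, Complex.star_def,
      Complex.conj_ofReal, e₁, e₂, e₃, e₄] <;>
    push_cast <;> [exact_mod_cast h12; exact_mod_cast h34]

lemma diagKraus_apply (b₁ b₂ b₃ b₄ : ℝ) (h₁ : 0 ≤ b₁) (h₂ : 0 ≤ b₂) (h₃ : 0 ≤ b₃)
    (h₄ : 0 ≤ b₄) (X : Matrix (Fin 2) (Fin 2) ℂ) :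
    krausMap 4 (diagKraus b₁ b₂ b₃ b₄) X
      = !![(b₁ : ℂ) * X 0 0 + (b₃ : ℂ) * X 1 1, 0;
           0, (b₂ : ℂ) * X 0 0 + (b₄ : ℂ) * X 1 1] := by
  have e₁ : (Real.sqrt b₁ : ℂ) * (Real.sqrt b₁ : ℂ) = (b₁ : ℂ) := by
    rw [← Complex.ofReal_mul, Real.mul_self_sqrt h₁]
  have e₂ : (Real.sqrt b₂ : ℂ) * (Real.sqrt b₂ : ℂ) = (b₂ : ℂ) := by
    rw [← Complex.ofReal_mul, Real.mul_self_sqrt h₂]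
  have e₃ : (Real.sqrt b₃ : ℂ) * (Real.sqrt b₃ : ℂ) = (b₃ : ℂ) := by
    rw [← Complex.ofReal_mul, Real.mul_self_sqrt h₃]
  have e₄ : (Real.sqrt b₄ : ℂ) * (Real.sqrt b₄ : ℂ) = (b₄ : ℂ) := by
    rw [← Complex.ofReal_mul, Real.mul_self_sqrt h₄]
  ext i j
  fin_cases i <;> fin_cases j <;>
    simp [krausMap, diagKraus, Fin.sum_univ_four, Matrix.mul_apply, Fin.sum_univ_two,
      Matrix.vecMul, dotProduct, Matrix.conjTranspose_apply, Complex.star_def,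
      Complex.conj_ofReal]
  all_goals
    first
      | linear_combination (X 0 0) * e₁ + (X 1 1) * e₃
      | linear_combination (X 0 0) * e₂ + (X 1 1) * e₄
  
/-- Main auxiliary lemma assembling the whole statement from an abstract optimal
quasiprobability decomposition. -/
lemma final_aux (y nN p₂ b₁ b₂ b₃ b₄ : ℝ)
    (hy0 : 0 ≤ y) (hy1 : y < 1) (hN0 : 0 ≤ nN) (hN1 : nN ≤ 1)
    (hb₁ : 0 ≤ b₁) (hb₂ : 0 ≤ b₂) (hb₃ : 0 ≤ b₃) (hb₄ : 0 ≤ b₄)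
    (hb12 : b₁ + b₂ = 1) (hb34 : b₃ + b₄ = 1) (hp₂ : 0 ≤ p₂)
    (hc1 : p₂ * b₂ = y * nN / (1 - y))
    (hc2 : p₂ * b₃ = y * (1 - nN) / (1 - y))
    (hsle : Real.sqrt (1 - y) ≤ (1 + p₂) * (1 - y))
    (habs : 1 + 2 * p₂ = (1 + |y - 2 * nN * y|) / (1 - y))
    (hlow : (1 - y + 2 * nN * y) / (1 - y) = 1 + 2 * p₂
          ∨ (1 + y - 2 * nN * y) / (1 - y) = 1 + 2 * p₂) :
    ∃ Ainv : Matrix (Fin 2) (Fin 2) ℂ → Matrix (Fin 2) (Fin 2) ℂ,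
      IsLinearMap ℂ Ainv ∧ (∀ X, Ainv (gadChannel y nN X) = X) ∧
      (2 : ℝ) ^ nu Ainv = (1 + |y - 2 * nN * y|) / (1 - y) := by
  have h1y : (0:ℝ) < 1 - y := by linarith
  have h1p : (0:ℝ) < 1 + p₂ := by linarith
  have hs1 : 0 < Real.sqrt (1 - y) := Real.sqrt_pos.mpr h1y
  have hs1sq : Real.sqrt (1 - y) * Real.sqrt (1 - y) = 1 - y := Real.mul_self_sqrt h1y.le
  set s' : ℝ := Real.sqrt (1 - y) / ((1 + p₂) * (1 - y)) with hs'def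
  have hs'0 : 0 ≤ s' := div_nonneg hs1.le (by positivity)
  have hs'1 : s' ≤ 1 := (div_le_one (by positivity)).mpr hsle
  have hα : 0 ≤ (1 + s') / 2 := by linarith
  have hβ : 0 ≤ (1 - s') / 2 := by linarith
  have hab : (1 + s') / 2 + (1 - s') / 2 = 1 := by ring
  have hd : (1 + s') / 2 - (1 - s') / 2 = s' := by ring
  have einv : (Real.sqrt (1 - y))⁻¹ = (1 + p₂) * s' := by
    rw [hs'def]
    field_simp
    linear_combination (-1 : ℝ) * hs1sq
  set O₁ := krausMap 2 (dephKraus ((1 + s') / 2) ((1 - s') / 2)) with hO₁def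
  set O₂ := krausMap 4 (diagKraus b₁ b₂ b₃ b₄) with hO₂def
  have hO₁ : IsCPTP O₁ := isCPTP_krausMap _ _ (dephKraus_sum _ _ hα hβ hab)
  have hO₂ : IsCPTP O₂ := isCPTP_krausMap _ _ (diagKraus_sum _ _ _ _ hb₁ hb₂ hb₃ hb₄ hb12 hb34)
  -- the real coefficient identities
  have e00 : (1 - y + nN * y) / (1 - y) = (1 + p₂) - p₂ * b₁ := by
    have h' : p₂ * b₁ = p₂ - p₂ * b₂ := by linear_combination p₂ * hb12
    rw [h', hc1]
    field_simp
    ring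
  have e11 : (1 - nN * y) / (1 - y) = (1 + p₂) - p₂ * b₄ := by
    have h' : p₂ * b₄ = p₂ - p₂ * b₃ := by linear_combination p₂ * hb34
    rw [h', hc2]
    field_simp
    ring
  -- the decomposition identity
  have hdecomp : ∀ X, ainvMap y nN X
      = ∑ i : Fin 2, ((![1 + p₂, -p₂] i : ℝ) : ℂ) • ![O₁, O₂] i X := by
    intro X
    rw [Fin.sum_univ_two]
    simp only [Matrix.cons_val_zero, Matrix.cons_val_one, Matrix.head_cons]
    rw [hO₁def, hO₂def, dephKraus_apply _ _ s' hα hβ hab hd,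
      diagKraus_apply _ _ _ _ hb₁ hb₂ hb₃ hb₄]
    have ce00 : (((1 - y + nN * y) / (1 - y) : ℝ) : ℂ)
        = ((1 + p₂ : ℝ) : ℂ) - ((p₂ : ℝ) : ℂ) * ((b₁ : ℝ) : ℂ) := by
      rw [show ((1 + p₂ : ℝ) : ℂ) - ((p₂ : ℝ) : ℂ) * ((b₁ : ℝ) : ℂ)
          = (((1 + p₂) - p₂ * b₁ : ℝ) : ℂ) by push_cast; ring, ← e00]
    have ce11 : (((1 - nN * y) / (1 - y) : ℝ) : ℂ)
        = ((1 + p₂ : ℝ) : ℂ) - ((p₂ : ℝ) : ℂ) * ((b₄ : ℝ) : ℂ) := by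
      rw [show ((1 + p₂ : ℝ) : ℂ) - ((p₂ : ℝ) : ℂ) * ((b₄ : ℝ) : ℂ)
          = (((1 + p₂) - p₂ * b₄ : ℝ) : ℂ) by push_cast; ring, ← e11]
    have ce2 : (((y * (1 - nN)) / (1 - y) : ℝ) : ℂ) = ((p₂ : ℝ) : ℂ) * ((b₃ : ℝ) : ℂ) := by
      rw [show ((p₂ : ℝ) : ℂ) * ((b₃ : ℝ) : ℂ) = ((p₂ * b₃ : ℝ) : ℂ) by push_cast; ring, hc2]
    have ce1 : (((y * nN) / (1 - y) : ℝ) : ℂ) = ((p₂ : ℝ) : ℂ) * ((b₂ : ℝ) : ℂ) := by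
      rw [show ((p₂ : ℝ) : ℂ) * ((b₂ : ℝ) : ℂ) = ((p₂ * b₂ : ℝ) : ℂ) by push_cast; ring, hc1]
    have ceinv : (((Real.sqrt (1 - y))⁻¹ : ℝ) : ℂ) = ((1 + p₂ : ℝ) : ℂ) * ((s' : ℝ) : ℂ) := by
      rw [show ((1 + p₂ : ℝ) : ℂ) * ((s' : ℝ) : ℂ) = (((1 + p₂) * s' : ℝ) : ℂ) by push_cast; ring,
        ← einv]
    ext i j
    fin_cases i <;> fin_cases j
    · show (((1 - y + nN * y) / (1 - y) : ℝ) : ℂ) * X 0 0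
          - (((y * (1 - nN)) / (1 - y) : ℝ) : ℂ) * X 1 1 = _
      rw [ce00, ce2]
      simp [Matrix.smul_apply, smul_eq_mul]
      push_cast
      ring
    · show (((Real.sqrt (1 - y))⁻¹ : ℝ) : ℂ) * X 0 1 = _
      rw [ceinv]
      simp [Matrix.smul_apply, smul_eq_mul]
      push_cast
      ring
    · show (((Real.sqrt (1 - y))⁻¹ : ℝ) : ℂ) * X 1 0 = _
      rw [ceinv]
      simp [Matrix.smul_apply, smul_eq_mul]
      push_cast
      ring
    · show -(((y * nN) / (1 - y) : ℝ) : ℂ) * X 0 0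
          + (((1 - nN * y) / (1 - y) : ℝ) : ℂ) * X 1 1 = _
      rw [ce11, ce1]
      simp [Matrix.smul_apply, smul_eq_mul]
      push_cast
      ring
  -- membership of the optimal cost
  have hmem : 1 + 2 * p₂ ∈ decompCosts (ainvMap y nN) := by
    refine ⟨2, ![1 + p₂, -p₂], ![O₁, O₂], ?_, hdecomp, ?_⟩
    · intro i
      fin_cases i
      · exact hO₁
      · exact hO₂
    · rw [Fin.sum_univ_two]
      simp only [Matrix.cons_val_zero, Matrix.cons_val_one, Matrix.head_cons, abs_neg]
      rw [abs_of_nonneg (by linarith : (0:ℝ) ≤ 1 + p₂), abs_of_nonneg hp₂]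
      ring
  -- lower bound on all costs
  have hlb : ∀ c ∈ decompCosts (ainvMap y nN), 1 + 2 * p₂ ≤ c := by
    rcases hlow with h | h
    · refine lower_aux _ 0 1 (by decide) _ ?_
      have h00 : (ainvMap y nN (Matrix.single 0 0 1)) 0 0
          = (((1 - y + nN * y) / (1 - y) : ℝ) : ℂ) := by
        simp [ainvMap, Matrix.single]
      have h11 : (ainvMap y nN (Matrix.single 0 0 1)) 1 1
          = -(((y * nN) / (1 - y) : ℝ) : ℂ) := by
        simp [ainvMap, Matrix.single]
      rw [h00, h11, Complex.neg_re, Complex.ofReal_re, Complex.ofReal_re, ← h]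
      field_simp
      try ring
    · refine lower_aux _ 1 0 (by decide) _ ?_
      have h11 : (ainvMap y nN (Matrix.single 1 1 1)) 1 1
          = (((1 - nN * y) / (1 - y) : ℝ) : ℂ) := by
        simp [ainvMap, Matrix.single]
      have h00 : (ainvMap y nN (Matrix.single 1 1 1)) 0 0
          = -(((y * (1 - nN)) / (1 - y) : ℝ) : ℂ) := by
        simp [ainvMap, Matrix.single]
      rw [h00, h11, Complex.neg_re, Complex.ofReal_re, Complex.ofReal_re, ← h]
      field_simp
      try ring
  have hInf : sInf (decompCosts (ainvMap y nN)) = 1 + 2 * p₂ :=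
    le_antisymm (csInf_le ⟨1 + 2 * p₂, fun c hc => hlb c hc⟩ hmem) (le_csInf ⟨_, hmem⟩ hlb)
  refine ⟨ainvMap y nN, ainv_linear y nN, fun X => ainv_gad y nN hy0 hy1 hN0 hN1 X, ?_⟩
  rw [nu, hInf, ← habs]
  exact Real.rpow_logb (by norm_num) (by norm_num) (by linarith)


/-- the generalized amplitude damping channel `A_{y,N}` (with `0 ≤ y < 1`,
`0 ≤ N ≤ 1`) is invertible and `2^{ν(A_{y,N}⁻¹)} = (1 + |y − 2Ny|)/(1 − y)`. -/
theorem nu_generalized_amplitude_damping_inverse (y nN : ℝ)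
    (hy0 : 0 ≤ y) (hy1 : y < 1) (hN0 : 0 ≤ nN) (hN1 : nN ≤ 1) :
    ∃ Ainv : Matrix (Fin 2) (Fin 2) ℂ → Matrix (Fin 2) (Fin 2) ℂ,
      IsLinearMap ℂ Ainv ∧ (∀ X, Ainv (gadChannel y nN X) = X) ∧
      (2 : ℝ) ^ nu Ainv = (1 + |y - 2 * nN * y|) / (1 - y) := by
  have h1y : (0:ℝ) < 1 - y := by linarith
  rcases le_total nN (1/2) with hc | hc
  · -- N ≤ 1/2
    have hNlt : nN < 1 := by linarith
    have h1N : (0:ℝ) < 1 - nN := by linarith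
    refine final_aux y nN (y * (1 - nN) / (1 - y)) ((1 - 2*nN)/(1 - nN)) (nN/(1 - nN)) 1 0
      hy0 hy1 hN0 hN1 ?_ ?_ ?_ ?_ ?_ ?_ ?_ ?_ ?_ ?_ ?_ ?_
    · exact div_nonneg (by linarith) h1N.le
    · exact div_nonneg hN0 h1N.le
    · norm_num
    · norm_num
    · field_simp
      ring
    · norm_num
    · exact div_nonneg (mul_nonneg hy0 (by linarith)) h1y.le
    · field_simp
    · field_simp
    · have key : Real.sqrt (1 - y) ≤ 1 - y * nN := by
        rw [show (1:ℝ) - y * nN = Real.sqrt ((1 - y * nN)^2) from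
          (Real.sqrt_sq (by nlinarith)).symm]
        refine Real.sqrt_le_sqrt ?_
        nlinarith [sq_nonneg (y*nN), mul_nonneg hy0 (by linarith : (0:ℝ) ≤ 1 - 2*nN)]
      have he : (1 + y * (1 - nN) / (1 - y)) * (1 - y) = 1 - y * nN := by
        field_simp
        try ring
      rw [he]
      exact key
    · rw [abs_of_nonneg (by nlinarith : (0:ℝ) ≤ y - 2 * nN * y)]
      field_simp
      try ring
    · right
      field_simp
      try ring
  · -- N ≥ 1/2
    have hNpos : (0:ℝ) < nN := by linarith
    refine final_aux y nN (y * nN / (1 - y)) 0 1 ((1 - nN)/nN) ((2*nN - 1)/nN)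
      hy0 hy1 hN0 hN1 ?_ ?_ ?_ ?_ ?_ ?_ ?_ ?_ ?_ ?_ ?_ ?_
    · norm_num
    · norm_num
    · exact div_nonneg (by linarith) hNpos.le
    · exact div_nonneg (by linarith) hNpos.le
    · norm_num
    · field_simp
      ring
    · exact div_nonneg (mul_nonneg hy0 hN0) h1y.le
    · field_simp
    · field_simp
    · have key : Real.sqrt (1 - y) ≤ 1 - y + y * nN := by
        rw [show (1:ℝ) - y + y * nN = Real.sqrt ((1 - y + y * nN)^2) from
          (Real.sqrt_sq (by nlinarith)).symm]
        refine Real.sqrt_le_sqrt ?_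
        nlinarith [sq_nonneg (y*nN), mul_nonneg (mul_nonneg hy0 h1y.le)
          (by linarith : (0:ℝ) ≤ 2*nN - 1)]
      have he : (1 + y * nN / (1 - y)) * (1 - y) = 1 - y + y * nN := by
        field_simp
        try ring
      rw [he]
      exact key
    · rw [abs_of_nonpos (by nlinarith : y - 2 * nN * y ≤ 0)]
      field_simp
      try ring
    · left
      field_simp
      try ring

end
end

section
/- Let N be an HPTP linear map on M_d(ℂ). Define the robustness of physical implementability R(N) = min{ s ≥ 0 : there exists a CPTP map T such that (N + sT)/(1+s) is CPTP }. Then 2^{ν(N)} = 2R(N) + 1. -/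
open scoped Kronecker ComplexOrder
open Matrix

noncomputable section

namespace NuPfAux
variable {n m : Type*} [Fintype n] [Fintype m] [DecidableEq n] [DecidableEq m]

section GeneralIota
variable {ι : Type*} [Fintype ι] [DecidableEq ι]

lemma dot_single {K : Matrix ι ι ℂ} (u v : ι) :
    star (Pi.single u (1:ℂ)) ⬝ᵥ K *ᵥ Pi.single v 1 = K u v := by
  rw [Matrix.mulVec_single]
  simp [dotProduct, Pi.single_apply, apply_ite (star : ℂ → ℂ), Finset.sum_ite_eq', ite_mul]

lemma psd_diag_nonneg {K : Matrix ι ι ℂ} (hK : K.PosSemidef) (p : ι) : 0 ≤ K p p := by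
  have := hK.dotProduct_mulVec_nonneg (Pi.single p 1)
  rwa [dot_single] at this

lemma isClosed_psd : IsClosed {M : Matrix ι ι ℂ | M.PosSemidef} := by
  have hset : {M : Matrix ι ι ℂ | M.PosSemidef}
      = {M : Matrix ι ι ℂ | Mᴴ = M} ∩ ⋂ x : ι → ℂ, {M | 0 ≤ star x ⬝ᵥ M *ᵥ x} := by
    ext M
    simp only [Set.mem_setOf_eq, Set.mem_inter_iff, Set.mem_iInter]
    exact Matrix.posSemidef_iff_dotProduct_mulVec
  rw [hset]
  refine IsClosed.inter (isClosed_eq (continuous_id.matrix_conjTranspose) continuous_id)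
    (isClosed_iInter fun x => ?_)
  have hcont : Continuous fun M : Matrix ι ι ℂ => star x ⬝ᵥ M *ᵥ x := by
    simp only [dotProduct, mulVec]
    exact continuous_finset_sum _ fun i _ => Continuous.mul continuous_const
      (continuous_finset_sum _ fun j _ => (continuous_id.matrix_elem i j).mul continuous_const)
  have hcl : IsClosed {z : ℂ | 0 ≤ z} := by
    have : {z : ℂ | 0 ≤ z} = Complex.re ⁻¹' Set.Ici 0 ∩ Complex.im ⁻¹' {0} := by
      ext z
      simp [Complex.nonneg_iff, eq_comm]
    rw [this]
    exact (isClosed_Ici.preimage Complex.continuous_re).inter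
      (isClosed_singleton.preimage Complex.continuous_im)
  exact hcl.preimage hcont

lemma psd_entry_bound {K : Matrix ι ι ℂ} (hK : K.PosSemidef) {c : ℝ}
    (hdiag : ∀ p, K p p ≤ (c : ℂ)) (p q : ι) : norm (K p q) ≤ c := by
  have hc0 : (0:ℝ) ≤ c := by
    have h0 := psd_diag_nonneg hK p
    have := h0.trans (hdiag p)
    exact_mod_cast (Complex.real_le_real.mp (by exact_mod_cast this))
  by_cases hz : K p q = 0
  · simp [hz, hc0]
  set z := K p q with hzdef
  set r : ℝ := norm z with hrdef
  have hr0 : 0 < r := by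
    rw [hrdef]
    exact (norm_pos_iff.mpr hz)
  set b : ℂ := -(starRingEnd ℂ z) / (r : ℂ) with hbdef
  set x : ι → ℂ := Pi.single p (1:ℂ) + b • (Pi.single q (1:ℂ) : ι → ℂ) with hxdef
  have hexp : star x ⬝ᵥ K *ᵥ x
      = K p p + b * K p q + star b * K q p + star b * b * K q q := by
    rw [hxdef]
    rw [star_add, star_smul, add_dotProduct, smul_dotProduct, mulVec_add, mulVec_smul]
    simp only [dotProduct_add, dotProduct_smul]
    rw [dot_single, dot_single, dot_single, dot_single]
    simp only [smul_eq_mul]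
    ring
  have hqp : K q p = star z := by
    rw [hzdef, ← hK.1.apply q p]
  have hbz : b * z = -(r : ℂ) := by
    rw [hbdef]
    field_simp
    rw [mul_comm, Complex.mul_conj]
    rw [show Complex.normSq z = r ^ 2 by rw [hrdef, Complex.sq_norm]]
    push_cast
    ring
  have hbb : star b * b = 1 := by
    rw [hbdef]
    simp only [star_div₀, star_neg, Complex.star_def, Complex.conj_conj, Complex.conj_ofReal]
    field_simp
    rw [Complex.mul_conj, show Complex.normSq z = r ^ 2 by rw [hrdef, Complex.sq_norm]]
    push_cast
    ring
  have hsb : star b * K q p = -(r : ℂ) := by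
    rw [hqp, show star b * star z = star (z * b) from (star_mul z b).symm, mul_comm z b, hbz]
    simp
  have h0 := hK.dotProduct_mulVec_nonneg x
  rw [hexp, ← hzdef, hbz, hsb, hbb, one_mul] at h0
  -- h0 : 0 ≤ K p p + -r + -r + K q q
  have h1 : (2 * r : ℂ) ≤ K p p + K q q := by
    calc (2 * r : ℂ) = 0 + 2 * r := by ring
      _ ≤ (K p p + -(r:ℂ) + -(r:ℂ) + K q q) + 2 * r := add_le_add h0 le_rfl
      _ = K p p + K q q := by ring
  have h2 : (2 * r : ℂ) ≤ ((2 * c : ℝ) : ℂ) := by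
    calc (2 * r : ℂ) ≤ K p p + K q q := h1
      _ ≤ (c : ℂ) + (c : ℂ) := add_le_add (hdiag p) (hdiag q)
      _ = ((2 * c : ℝ) : ℂ) := by push_cast; ring
  have : (2 * r : ℝ) ≤ 2 * c := by
    have := h2
    rw [show (2 * r : ℂ) = ((2 * r : ℝ) : ℂ) by push_cast; ring] at this
    exact_mod_cast Complex.real_le_real.mp this
  linarith

lemma herm_dot_real {J : Matrix ι ι ℂ} (hJ : J.IsHermitian) (x : ι → ℂ) :
    star (star x ⬝ᵥ J *ᵥ x) = star x ⬝ᵥ J *ᵥ x := by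
  calc star (star x ⬝ᵥ J *ᵥ x) = star (star (star (J *ᵥ x) ⬝ᵥ x)) := by
        rw [Matrix.star_dotProduct]
    _ = star (J *ᵥ x) ⬝ᵥ x := star_star _
    _ = (star x ᵥ* Jᴴ) ⬝ᵥ x := by rw [star_mulVec]
    _ = star x ⬝ᵥ (Jᴴ *ᵥ x) := (dotProduct_mulVec _ _ _).symm
    _ = star x ⬝ᵥ J *ᵥ x := by rw [hJ.eq]

lemma exists_psd_shift {J : Matrix ι ι ℂ} (hJ : J.IsHermitian) :
    (J + (((∑ p, ∑ q, norm (J p q)) : ℝ) : ℂ) • 1).PosSemidef := by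
  set t : ℝ := ∑ p, ∑ q, norm (J p q) with ht
  refine Matrix.PosSemidef.of_dotProduct_mulVec_nonneg ?_ ?_
  · refine hJ.add ?_
    unfold Matrix.IsHermitian
    rw [conjTranspose_smul, conjTranspose_one]
    rw [show star ((t:ℝ):ℂ) = ((t:ℝ):ℂ) from Complex.conj_ofReal t]
  · intro x
    set z : ℂ := star x ⬝ᵥ J *ᵥ x with hz
    set S : ℝ := ∑ i, norm (x i) ^ 2 with hS
    have hS0 : 0 ≤ S := Finset.sum_nonneg fun i _ => sq_nonneg _
    have hsq : ∀ p, norm (x p) ^ 2 ≤ S :=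
      fun p => Finset.single_le_sum (f := fun i => norm (x i) ^ 2)
        (fun i _ => sq_nonneg _) (Finset.mem_univ p)
    have hxy : ∀ p q, norm (x p) * norm (x q) ≤ S := by
      intro p q
      nlinarith [hsq p, hsq q, sq_nonneg (norm (x p) - norm (x q)),
        norm_nonneg (x p), norm_nonneg (x q)]
    have hzbound : norm z ≤ t * S := by
      calc norm z ≤ ∑ p, norm (star (x p) * (J *ᵥ x) p) := by
            rw [hz]
            exact norm_sum_le _ _
        _ ≤ ∑ p, ∑ q, norm (J p q) * S := by
            refine Finset.sum_le_sum fun p _ => ?_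
            rw [norm_mul]
            have h1 : norm ((J *ᵥ x) p) ≤ ∑ q, norm (J p q) * norm (x q) := by
              calc norm ((J *ᵥ x) p) ≤ ∑ q, norm (J p q * x q) :=
                    norm_sum_le _ _
                _ = ∑ q, norm (J p q) * norm (x q) := by
                    exact Finset.sum_congr rfl fun q _ => norm_mul _ _
            calc norm (star (x p)) * norm ((J *ᵥ x) p)
                ≤ norm (star (x p)) * ∑ q, norm (J p q) * norm (x q) := by
                  exact mul_le_mul_of_nonneg_left h1 (norm_nonneg _)
              _ = ∑ q, norm (J p q) * (norm (x p) * norm (x q)) := by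
                  rw [Finset.mul_sum]
                  refine Finset.sum_congr rfl fun q _ => ?_
                  rw [show norm (star (x p)) = norm (x p) from
                    Complex.norm_conj _]
                  ring
              _ ≤ ∑ q, norm (J p q) * S :=
                  Finset.sum_le_sum fun q _ =>
                    mul_le_mul_of_nonneg_left (hxy p q) (norm_nonneg _)
        _ = t * S := by
            rw [ht, Finset.sum_mul]
            exact Finset.sum_congr rfl fun p _ => by rw [Finset.sum_mul]
    have hself : star x ⬝ᵥ x = ((S:ℝ):ℂ) := by
      rw [hS]
      push_cast
      simp only [dotProduct, Pi.star_apply, Complex.star_def]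
      refine Finset.sum_congr rfl fun i _ => ?_
      rw [mul_comm, Complex.mul_conj]
      norm_cast
      rw [Complex.normSq_eq_norm_sq]
    have hdot : star x ⬝ᵥ (J + ((t:ℝ):ℂ) • 1) *ᵥ x = z + (t:ℂ) * (S:ℂ) := by
      rw [add_mulVec, dotProduct_add, smul_mulVec, one_mulVec, dotProduct_smul,
        hself, smul_eq_mul, ← hz]
    rw [hdot, Complex.nonneg_iff]
    have hzim : z.im = 0 := by
      have h1 := herm_dot_real hJ x
      rw [← hz] at h1
      have h2 := congrArg Complex.im h1
      simp only [Complex.star_def, Complex.conj_im] at h2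
      linarith
    constructor
    · have him : -(norm z) ≤ z.re := by
        have h1 := Complex.abs_re_le_norm z
        have h2 := neg_abs_le z.re
        have h3 := abs_nonneg z.re
        cases' abs_le.mp h1 with h4 h5
        linarith [le_abs_self z.re]
      simp only [Complex.add_re]
      rw [← Complex.ofReal_mul, Complex.ofReal_re]
      linarith
    · simp only [Complex.add_im, hzim]
      rw [← Complex.ofReal_mul]
      simp

end GeneralIota

lemma psd_add {ι : Type*} [Fintype ι] {A B : Matrix ι ι ℂ} (hA : A.PosSemidef)
    (hB : B.PosSemidef) : (A + B).PosSemidef :=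
  Matrix.PosSemidef.of_dotProduct_mulVec_nonneg (hA.1.add hB.1) fun x => by
    rw [add_mulVec, dotProduct_add]
    exact add_nonneg (hA.dotProduct_mulVec_nonneg x) (hB.dotProduct_mulVec_nonneg x)

lemma psd_smul {ι : Type*} [Fintype ι] {A : Matrix ι ι ℂ} (hA : A.PosSemidef)
    {c : ℝ} (hc : 0 ≤ c) : ((c : ℂ) • A).PosSemidef := by
  refine Matrix.PosSemidef.of_dotProduct_mulVec_nonneg ?_ fun x => ?_
  · have := hA.1
    unfold Matrix.IsHermitian at *
    rw [conjTranspose_smul, this, Complex.star_def, Complex.conj_ofReal]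
  · rw [smul_mulVec, dotProduct_smul, smul_eq_mul]
    exact mul_nonneg (by exact_mod_cast hc) (hA.dotProduct_mulVec_nonneg x)

lemma psd_sum {ι κ : Type*} [Fintype ι] (s : Finset κ) (f : κ → Matrix ι ι ℂ)
    (h : ∀ i ∈ s, (f i).PosSemidef) : (∑ i ∈ s, f i).PosSemidef := by
  classical
  induction s using Finset.induction with
  | empty => simpa using Matrix.PosSemidef.zero
  | @insert a s ha ih =>
      rw [Finset.sum_insert ha]
      exact psd_add (h _ (Finset.mem_insert_self a s))
        (ih fun i hi => h i (Finset.mem_insert_of_mem hi))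

/-- The map associated to a Choi matrix. -/
def mOC (K : Matrix (n × m) (n × m) ℂ) (X : Matrix n n ℂ) : Matrix m m ℂ :=
  Matrix.of fun a b => ∑ i, ∑ j, X i j * K (i, a) (j, b)

lemma mOC_linear (K : Matrix (n × m) (n × m) ℂ) : IsLinearMap ℂ (mOC K) := by
  constructor
  · intro X Y
    ext a b
    simp [mOC, add_mul, Finset.sum_add_distrib]
  · intro c X
    ext a b
    simp [mOC, Finset.mul_sum, mul_assoc]

lemma choi_mOC (K : Matrix (n × m) (n × m) ℂ) : choiMatrix (mOC K) = K := by
  ext ⟨i, a⟩ ⟨j, b⟩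
  simp only [choiMatrix, mOC, Matrix.of_apply, Matrix.single, Matrix.of_apply]
  rw [Finset.sum_comm]
  simp [Finset.sum_ite_eq', ite_and]

lemma mOC_choi {N : Matrix n n ℂ → Matrix m m ℂ} (hlin : IsLinearMap ℂ N) (X : Matrix n n ℂ) :
    N X = mOC (choiMatrix N) X := by
  let L := IsLinearMap.mk' N hlin
  have key : L X = ∑ i, ∑ j, X i j • L (Matrix.single i j 1) := by
    conv_lhs => rw [matrix_eq_sum_single X]
    rw [map_sum]
    refine Finset.sum_congr rfl fun i _ => ?_
    rw [map_sum]
    refine Finset.sum_congr rfl fun j _ => ?_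
    rw [← _root_.map_smul, Matrix.smul_single, smul_eq_mul, mul_one]
  have hNX : N X = ∑ i, ∑ j, X i j • N (Matrix.single i j 1) := key
  ext a b
  rw [hNX]
  simp [mOC, choiMatrix, Matrix.sum_apply]

lemma mOC_tp (K : Matrix (n × m) (n × m) ℂ) (hK : ptraceB K = 1) (X : Matrix n n ℂ) :
    (mOC K X).trace = X.trace := by
  have h : ∀ i j, ∑ a, K (i, a) (j, a) = if i = j then 1 else 0 := by
    intro i j
    have := congrFun (congrFun hK i) j
    simpa [ptraceB, Matrix.one_apply] using this
  simp only [Matrix.trace, Matrix.diag, mOC, Matrix.of_apply]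
  rw [Finset.sum_comm]
  calc ∑ i, ∑ a, ∑ j, X i j * K (i, a) (j, a)
      = ∑ i, ∑ j, X i j * ∑ a, K (i, a) (j, a) := by
        refine Finset.sum_congr rfl fun i _ => ?_
        rw [Finset.sum_comm]
        exact Finset.sum_congr rfl fun j _ => by rw [Finset.mul_sum]
    _ = ∑ i, X i i := by
        refine Finset.sum_congr rfl fun i _ => ?_
        simp [h]
    _ = X.trace := rfl


lemma mOC_cp {K : Matrix (n × m) (n × m) ℂ} (hK : K.PosSemidef) (k : ℕ)
    (M : Matrix (Fin k × n) (Fin k × n) ℂ) (hM : M.PosSemidef) :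
    (idTensor (Fin k) (mOC K) M).PosSemidef := by
  classical
  open scoped MatrixOrder in
  obtain ⟨B', hB'⟩ := CStarAlgebra.nonneg_iff_eq_star_mul_self.mp hK.nonneg
  set B := B'ᴴ with hBdef
  have hfact : ∀ p q, K p q = ∑ r, B p r * star (B q r) := by
    intro p q
    rw [hB', Matrix.star_eq_conjTranspose, Matrix.mul_apply]
    refine Finset.sum_congr rfl fun r _ => ?_
    simp [hBdef, Matrix.conjTranspose_apply]
  set C : (n × m) → Matrix (Fin k × m) (Fin k × n) ℂ :=
    fun r => Matrix.of fun p q => if p.1 = q.1 then B (q.2, p.2) r else 0 with hCdef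
  have key : idTensor (Fin k) (mOC K) M = ∑ r, C r * M * (C r)ᴴ := by
    ext ⟨p₁, a⟩ ⟨q₁, b⟩
    have hterm : ∀ r, (C r * M * (C r)ᴴ) (p₁, a) (q₁, b)
        = ∑ i, ∑ j, M (p₁, i) (q₁, j) * (B (i, a) r * star (B (j, b) r)) := by
      intro r
      simp only [Matrix.mul_apply, Matrix.conjTranspose_apply, hCdef, Matrix.of_apply,
        Fintype.sum_prod_type, ite_mul, zero_mul, mul_ite, mul_zero, apply_ite (star : ℂ → ℂ),
        star_zero, Finset.sum_ite_eq, Finset.mem_univ, if_true, Finset.sum_ite_irrel,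
        Finset.sum_const_zero, Finset.sum_mul]
      rw [Finset.sum_comm]
      exact Finset.sum_congr rfl fun i _ => Finset.sum_congr rfl fun j _ => by ring
    simp only [Matrix.sum_apply, hterm, idTensor, mOC, Matrix.of_apply]
    calc (∑ i, ∑ j, M (p₁, i) (q₁, j) * K (i, a) (j, b))
        = ∑ i, ∑ j, ∑ r, M (p₁, i) (q₁, j) * (B (i, a) r * star (B (j, b) r)) := by
          refine Finset.sum_congr rfl fun i _ => Finset.sum_congr rfl fun j _ => ?_
          rw [hfact, Finset.mul_sum]
      _ = ∑ r, ∑ i, ∑ j, M (p₁, i) (q₁, j) * (B (i, a) r * star (B (j, b) r)) := by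
          rw [show (∑ i, ∑ j, ∑ r, M (p₁, i) (q₁, j) * (B (i, a) r * star (B (j, b) r)))
              = ∑ i, ∑ r, ∑ j, M (p₁, i) (q₁, j) * (B (i, a) r * star (B (j, b) r)) from
            Finset.sum_congr rfl fun i _ => Finset.sum_comm]
          exact Finset.sum_comm
  rw [key]
  exact psd_sum _ _ fun r _ => hM.mul_mul_conjTranspose_same (C r)

lemma choi_psd_of_cp {d : ℕ} {N : Matrix (Fin d) (Fin d) ℂ → Matrix m m ℂ} (hCP : IsCP N) :
    (choiMatrix N).PosSemidef := by
  classical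
  set v : (Fin d × Fin d) → ℂ := fun p => if p.1 = p.2 then 1 else 0 with hv
  set Ω : Matrix (Fin d × Fin d) (Fin d × Fin d) ℂ :=
    Matrix.of fun p q => v p * star (v q) with hΩ
  have hvstar : ∀ p, star (v p) = v p := by
    intro p; simp only [hv]; split <;> simp
  have hΩpsd : Ω.PosSemidef := by
    refine Matrix.PosSemidef.of_dotProduct_mulVec_nonneg ?_ ?_
    · ext p q
      simp only [conjTranspose_apply, hΩ, Matrix.of_apply, star_mul', star_star, hvstar]
      exact mul_comm _ _
    · intro x
      have hcalc : star x ⬝ᵥ Ω *ᵥ x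
          = star (∑ q, star (v q) * x q) * (∑ q, star (v q) * x q) := by
        calc star x ⬝ᵥ Ω *ᵥ x = ∑ p, ∑ q, (star (x p) * v p) * (star (v q) * x q) := by
              simp only [dotProduct, mulVec, hΩ, Matrix.of_apply, Finset.mul_sum]
              exact Finset.sum_congr rfl fun p _ => Finset.sum_congr rfl fun q _ => by
                simp only [Pi.star_apply]; ring
          _ = (∑ p, star (x p) * v p) * (∑ q, star (v q) * x q) := by
              rw [Finset.sum_mul_sum]
          _ = star (∑ q, star (v q) * x q) * (∑ q, star (v q) * x q) := by
              congr 1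
              rw [star_sum]
              exact Finset.sum_congr rfl fun q _ => by simp [star_mul', hvstar, mul_comm]
      rw [hcalc]
      exact star_mul_self_nonneg _
  have hid : idTensor (Fin d) N Ω = choiMatrix N := by
    ext ⟨i, a⟩ ⟨j, b⟩
    simp only [idTensor, choiMatrix, Matrix.of_apply]
    congr 1
    ext a' b'
    simp only [Matrix.of_apply, hΩ, hv, Matrix.single, hvstar]
    by_cases h1 : i = a' <;> by_cases h2 : j = b' <;> simp [h1, h2]
  have := hCP d Ω hΩpsd
  rwa [hid] at this

lemma ptraceB_choi {N : Matrix n n ℂ → Matrix m m ℂ} (hTP : IsTP N) :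
    ptraceB (choiMatrix N) = 1 := by
  ext i j
  have : ∑ a, N (Matrix.single i j 1) a a = (N (Matrix.single i j 1)).trace := rfl
  simp only [ptraceB, choiMatrix, Matrix.of_apply]
  rw [this, hTP]
  have h2 : (Matrix.single i j (1:ℂ)).trace = if i = j then 1 else 0 := by
    by_cases h : i = j
    · subst h; rw [Matrix.trace_single_eq_same]; simp
    · rw [Matrix.trace_single_eq_of_ne i j (1:ℂ) h]; simp [h]
  rw [h2, Matrix.one_apply]

lemma choi_hermitian {N : Matrix n n ℂ → Matrix m m ℂ} (hlin : IsLinearMap ℂ N)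
    (hHP : IsHP N) : (choiMatrix N).IsHermitian := by
  have hstar : ∀ X : Matrix n n ℂ, N Xᴴ = (N X)ᴴ := by
    intro X
    set A := X + Xᴴ with hA
    set B := Complex.I • (X - Xᴴ) with hB
    have hAh : A.IsHermitian := by
      unfold Matrix.IsHermitian
      rw [hA, conjTranspose_add, conjTranspose_conjTranspose, add_comm]
    have hBh : B.IsHermitian := by
      unfold Matrix.IsHermitian
      rw [hB, conjTranspose_smul, conjTranspose_sub, conjTranspose_conjTranspose]
      rw [show star Complex.I = -Complex.I by simp, neg_smul, smul_sub, smul_sub]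
      rw [neg_sub]
    have hX : X = (1/2 : ℂ) • A - (Complex.I/2) • B := by
      rw [hA, hB, smul_smul]
      have : Complex.I / 2 * Complex.I = -(1/2) := by
        rw [div_mul_eq_mul_div, Complex.I_mul_I]; norm_num
      rw [this]
      ext a b
      simp only [Matrix.sub_apply, Matrix.smul_apply, Matrix.add_apply, smul_eq_mul, neg_smul,
        Matrix.neg_apply]
      ring
    have hXH : Xᴴ = (1/2 : ℂ) • A + (Complex.I/2) • B := by
      rw [hA, hB, smul_smul]
      have : Complex.I / 2 * Complex.I = -(1/2) := by
        rw [div_mul_eq_mul_div, Complex.I_mul_I]; norm_num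
      rw [this]
      ext a b
      simp only [Matrix.add_apply, Matrix.smul_apply, Matrix.sub_apply, smul_eq_mul, neg_smul,
        Matrix.neg_apply]
      ring
    have hsub : ∀ (c₁ c₂ : ℂ) (P Q : Matrix n n ℂ),
        N (c₁ • P - c₂ • Q) = c₁ • N P - c₂ • N Q := by
      intro c₁ c₂ P Q
      calc N (c₁ • P - c₂ • Q) = N (c₁ • P + (-c₂) • Q) := by
            rw [sub_eq_add_neg, ← neg_smul]
        _ = N (c₁ • P) + N ((-c₂) • Q) := hlin.map_add _ _
        _ = c₁ • N P - c₂ • N Q := by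
            rw [hlin.map_smul, hlin.map_smul, neg_smul, ← sub_eq_add_neg]
    have hadd : ∀ (c₁ c₂ : ℂ) (P Q : Matrix n n ℂ),
        N (c₁ • P + c₂ • Q) = c₁ • N P + c₂ • N Q := by
      intro c₁ c₂ P Q
      rw [hlin.map_add, hlin.map_smul, hlin.map_smul]
    have h1 : N X = (1/2 : ℂ) • N A - (Complex.I/2) • N B := by
      conv_lhs => rw [hX]
      exact hsub _ _ _ _
    have h2 : N Xᴴ = (1/2 : ℂ) • N A + (Complex.I/2) • N B := by
      conv_lhs => rw [hXH]
      exact hadd _ _ _ _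
    rw [h2, h1, conjTranspose_sub, conjTranspose_smul, conjTranspose_smul,
      hHP A hAh, hHP B hBh]
    rw [show star ((1:ℂ)/2) = 1/2 by simp, show star (Complex.I/2) = -(Complex.I/2) by
      simp [star_div₀]; ring]
    rw [neg_smul, sub_neg_eq_add]
  unfold Matrix.IsHermitian
  ext ⟨i, a⟩ ⟨j, b⟩
  simp only [conjTranspose_apply, choiMatrix, Matrix.of_apply]
  have hE : (Matrix.single j i (1:ℂ))ᴴ = Matrix.single i j 1 := by
    ext a' b'
    simp [Matrix.single, conjTranspose_apply, and_comm]
  rw [← hE, hstar]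
  simp [conjTranspose_apply]

lemma ptraceB_continuous : Continuous (ptraceB : Matrix (n × m) (n × m) ℂ → Matrix n n ℂ) :=
  continuous_matrix fun i j => continuous_finset_sum _ fun a _ => continuous_id.matrix_elem _ _

lemma diag_le_of_cset {K : Matrix (n × m) (n × m) ℂ} (hK : K.PosSemidef)
    (hKm : ptraceB K = 1) (p : n × m) : K p p ≤ ((Fintype.card n : ℝ) : ℂ) := by
  have htr : ∑ u : n × m, K u u = ((Fintype.card n : ℝ) : ℂ) := by
    rw [Fintype.sum_prod_type]
    have : ∀ i : n, ∑ a : m, K (i, a) (i, a) = 1 := by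
      intro i
      have := congrFun (congrFun hKm i) i
      simpa [ptraceB, Matrix.one_apply] using this
    simp [this]
  calc K p p ≤ ∑ u : n × m, K u u :=
        Finset.single_le_sum (f := fun u => K u u)
          (fun i _ => psd_diag_nonneg hK i) (Finset.mem_univ p)
    _ = _ := htr

lemma cset_compact :
    IsCompact {K : Matrix (n × m) (n × m) ℂ | K.PosSemidef ∧ ptraceB K = 1} := by
  set c : ℝ := (Fintype.card n : ℝ) with hc
  have hbig : IsCompact ((Set.univ.pi fun _ : (n × m) =>
      (Set.univ.pi fun _ : (n × m) => Metric.closedBall (0:ℂ) c)) :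
        Set (Matrix (n × m) (n × m) ℂ)) :=
    isCompact_univ_pi fun _ => isCompact_univ_pi fun _ => isCompact_closedBall _ _
  refine IsCompact.of_isClosed_subset hbig ?_ ?_
  · exact IsClosed.inter isClosed_psd
      (isClosed_eq ptraceB_continuous continuous_const)
  · intro K hK
    intro p _ q _
    rw [Metric.mem_closedBall, dist_zero_right]
    exact psd_entry_bound hK.1 (fun u => diag_le_of_cset hK.1 hK.2 u) p q

end NuPfAux

namespace NuPfAux
variable {n m : Type*} [Fintype n] [Fintype m] [DecidableEq n] [DecidableEq m]

lemma ptraceB_smul (c : ℂ) (A : Matrix (n × m) (n × m) ℂ) :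
    ptraceB (c • A) = c • ptraceB A := by
  ext i j
  simp [ptraceB, Finset.mul_sum]

lemma ptraceB_add (A B : Matrix (n × m) (n × m) ℂ) :
    ptraceB (A + B) = ptraceB A + ptraceB B := by
  ext i j
  simp [ptraceB, Finset.sum_add_distrib]

lemma ptraceB_sum {κ : Type*} (s : Finset κ) (f : κ → Matrix (n × m) (n × m) ℂ) :
    ptraceB (∑ i ∈ s, f i) = ∑ i ∈ s, ptraceB (f i) := by
  classical
  induction s using Finset.induction with
  | empty => ext i j; simp [ptraceB]
  | @insert a s ha ih => rw [Finset.sum_insert ha, Finset.sum_insert ha, ptraceB_add, ih]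

lemma ptraceB_one : ptraceB (1 : Matrix (n × m) (n × m) ℂ) = (Fintype.card m : ℂ) • 1 := by
  ext i j
  simp only [ptraceB, Matrix.of_apply, Matrix.smul_apply, Matrix.one_apply, smul_eq_mul]
  by_cases h : i = j
  · subst h
    simp [Prod.ext_iff, Finset.card_univ]
  · simp [Prod.ext_iff, h]

lemma mOC_cptp {K : Matrix (n × m) (n × m) ℂ} (hK : K.PosSemidef) (hKm : ptraceB K = 1) :
    IsCPTP (mOC K) :=
  ⟨mOC_linear K, fun k M hM => mOC_cp hK k M hM, fun X => mOC_tp K hKm X⟩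

lemma choi_mix (N T : Matrix n n ℂ → Matrix m m ℂ) (c s : ℂ) :
    choiMatrix (fun X => c • (N X + s • T X))
      = c • (choiMatrix N + s • choiMatrix T) := by
  ext p q
  simp [choiMatrix, Matrix.smul_apply, Matrix.add_apply]

lemma mOC_mix (A B : Matrix (n × m) (n × m) ℂ) (c s : ℂ) (X : Matrix n n ℂ) :
    mOC (c • (A + s • B)) X = c • (mOC A X + s • mOC B X) := by
  ext a b
  simp only [mOC, Matrix.of_apply, Matrix.smul_apply, Matrix.add_apply, smul_eq_mul, mul_add,
    Finset.sum_add_distrib, Finset.mul_sum]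
  congr 1
  · exact Finset.sum_congr rfl fun i _ => Finset.sum_congr rfl fun j _ => by ring
  · exact Finset.sum_congr rfl fun i _ => Finset.sum_congr rfl fun j _ => by ring

lemma memS_iff {d : ℕ} {N : Matrix (Fin d) (Fin d) ℂ → Matrix (Fin d) (Fin d) ℂ}
    (hlin : IsLinearMap ℂ N) (hTP : IsTP N) (s : ℝ) :
    (0 ≤ s ∧ ∃ T : Matrix (Fin d) (Fin d) ℂ → Matrix (Fin d) (Fin d) ℂ, IsCPTP T ∧
        IsCPTP (fun X => (((1 + s)⁻¹ : ℝ) : ℂ) • (N X + (s : ℂ) • T X)))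
      ↔ (0 ≤ s ∧ ∃ K : Matrix (Fin d × Fin d) (Fin d × Fin d) ℂ,
          K.PosSemidef ∧ ptraceB K = 1 ∧ (choiMatrix N + (s : ℂ) • K).PosSemidef) := by
  constructor
  · rintro ⟨hs, T, hT, hmix⟩
    have h1s : (0:ℝ) < 1 + s := by linarith
    refine ⟨hs, choiMatrix T, choi_psd_of_cp hT.2.1, ptraceB_choi hT.2.2, ?_⟩
    have h2 := choi_psd_of_cp hmix.2.1
    rw [choi_mix N T (((1 + s)⁻¹ : ℝ) : ℂ) ((s : ℝ) : ℂ)] at h2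
    have h3 : choiMatrix N + (s:ℂ) • choiMatrix T
        = ((1 + s : ℝ) : ℂ) • ((((1 + s)⁻¹ : ℝ) : ℂ) •
            (choiMatrix N + (s:ℂ) • choiMatrix T)) := by
      rw [smul_smul, ← Complex.ofReal_mul, mul_inv_cancel₀ h1s.ne', Complex.ofReal_one, one_smul]
    rw [h3]
    exact psd_smul h2 h1s.le
  · rintro ⟨hs, K, hKpsd, hKm, hpsd⟩
    have h1s : (0:ℝ) < 1 + s := by linarith
    refine ⟨hs, mOC K, mOC_cptp hKpsd hKm, ?_⟩
    have heq : (fun X => (((1 + s)⁻¹ : ℝ) : ℂ) • (N X + (s : ℂ) • mOC K X))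
        = mOC ((((1 + s)⁻¹ : ℝ) : ℂ) • (choiMatrix N + (s:ℂ) • K)) := by
      funext X
      rw [mOC_mix, ← mOC_choi hlin X]
    rw [heq]
    refine mOC_cptp (psd_smul hpsd (inv_nonneg.mpr h1s.le)) ?_
    rw [ptraceB_smul, ptraceB_add, ptraceB_smul, ptraceB_choi hTP, hKm]
    have h4 : (1 : Matrix (Fin d) (Fin d) ℂ) + (s:ℂ) • 1 = ((1 + s : ℝ) : ℂ) • 1 := by
      push_cast
      rw [add_smul, one_smul]
    rw [h4, smul_smul, ← Complex.ofReal_mul, inv_mul_cancel₀ h1s.ne', Complex.ofReal_one,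
      one_smul]

end NuPfAux


/-- the robustness of physical implementability
`R(N) = min{ s ≥ 0 : ∃ CPTP T, (N + sT)/(1+s) is CPTP }` satisfies `2^{ν(N)} = 2R(N) + 1`. -/
theorem nu_eq_two_robustness_add_one {d : ℕ} (hd : 0 < d)
    (N : Matrix (Fin d) (Fin d) ℂ → Matrix (Fin d) (Fin d) ℂ)
    (hlin : IsLinearMap ℂ N) (hHP : IsHP N) (hTP : IsTP N) :
    ∃ R : ℝ,
      IsLeast { s : ℝ | 0 ≤ s ∧
        ∃ T : Matrix (Fin d) (Fin d) ℂ → Matrix (Fin d) (Fin d) ℂ, IsCPTP T ∧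
          IsCPTP (fun X => (((1 + s)⁻¹ : ℝ) : ℂ) • (N X + (s : ℂ) • T X)) } R ∧
      (2 : ℝ) ^ nu N = 2 * R + 1 := by
  classical
  open NuPfAux in
  set J := choiMatrix N with hJdef
  set Sc : Set ℝ := {s : ℝ | 0 ≤ s ∧ ∃ K : Matrix (Fin d × Fin d) (Fin d × Fin d) ℂ,
      K.PosSemidef ∧ ptraceB K = 1 ∧ (J + (s:ℂ) • K).PosSemidef} with hSc
  have hSeq : { s : ℝ | 0 ≤ s ∧
        ∃ T : Matrix (Fin d) (Fin d) ℂ → Matrix (Fin d) (Fin d) ℂ, IsCPTP T ∧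
          IsCPTP (fun X => (((1 + s)⁻¹ : ℝ) : ℂ) • (N X + (s : ℂ) • T X)) } = Sc := by
    ext s
    exact NuPfAux.memS_iff hlin hTP s
  have hdR : (0:ℝ) < d := by exact_mod_cast hd
  -- the depolarizing Choi matrix
  set Kdep : Matrix (Fin d × Fin d) (Fin d × Fin d) ℂ := (((d:ℝ)⁻¹ : ℝ) : ℂ) • 1 with hKdep
  have hKdepPsd : Kdep.PosSemidef := NuPfAux.psd_smul Matrix.PosSemidef.one
    (inv_nonneg.mpr hdR.le)
  have hKdepM : ptraceB Kdep = 1 := by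
    rw [hKdep, NuPfAux.ptraceB_smul, NuPfAux.ptraceB_one, smul_smul]
    rw [show ((((d:ℝ)⁻¹ : ℝ) : ℂ) * (Fintype.card (Fin d) : ℂ)) = 1 by
      rw [Fintype.card_fin]
      push_cast
      field_simp]
    rw [one_smul]
  -- nonemptiness of Sc
  have hne : Sc.Nonempty := by
    set t : ℝ := ∑ p, ∑ q, norm (J p q) with ht
    have ht0 : 0 ≤ t := Finset.sum_nonneg fun p _ => Finset.sum_nonneg fun q _ =>
      norm_nonneg _
    refine ⟨(d:ℝ) * t, mul_nonneg hdR.le ht0, Kdep, hKdepPsd, hKdepM, ?_⟩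
    have hcol : (((d:ℝ) * t : ℝ) : ℂ) • Kdep = ((t:ℝ) : ℂ) • 1 := by
      rw [hKdep, smul_smul, ← Complex.ofReal_mul]
      congr 2
      rw [mul_comm (d:ℝ) t, mul_assoc, mul_inv_cancel₀ hdR.ne', mul_one]
    rw [hcol]
    exact NuPfAux.exists_psd_shift (NuPfAux.choi_hermitian hlin hHP)
  have hbdd : BddBelow Sc := ⟨0, fun s hs => hs.1⟩
  set R : ℝ := sInf Sc with hR
  have hR0 : 0 ≤ R := le_csInf hne fun b hb => hb.1
  have hRmem : R ∈ Sc := by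
    obtain ⟨u, -, hu, huS⟩ := exists_seq_tendsto_sInf hne hbdd
    have huS' : ∀ n, 0 ≤ u n ∧ ∃ K : Matrix (Fin d × Fin d) (Fin d × Fin d) ℂ,
        K.PosSemidef ∧ ptraceB K = 1 ∧ (J + ((u n : ℝ):ℂ) • K).PosSemidef := huS
    choose hu0 K hK1 hK2 hK3 using huS'
    haveI : FirstCountableTopology (Matrix (Fin d × Fin d) (Fin d × Fin d) ℂ) :=
      inferInstanceAs (FirstCountableTopology ((Fin d × Fin d) → (Fin d × Fin d) → ℂ))
    obtain ⟨Kinf, hKinf, φ, hφ, hKt⟩ :=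
      (NuPfAux.cset_compact (n := Fin d) (m := Fin d)).tendsto_subseq
        (fun n => Set.mem_setOf.mpr ⟨hK1 n, hK2 n⟩ : ∀ n, K n ∈
          {K : Matrix (Fin d × Fin d) (Fin d × Fin d) ℂ | K.PosSemidef ∧ ptraceB K = 1})
    refine ⟨hR0, Kinf, hKinf.1, hKinf.2, ?_⟩
    have husub : Filter.Tendsto (u ∘ φ) Filter.atTop (nhds R) := hu.comp hφ.tendsto_atTop
    have hcoe : Filter.Tendsto (fun n => ((u (φ n) : ℝ) : ℂ)) Filter.atTop (nhds ((R : ℝ):ℂ)) :=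
      (Complex.continuous_ofReal.tendsto _).comp husub
    have htend : Filter.Tendsto (fun n => J + ((u (φ n) : ℝ):ℂ) • K (φ n)) Filter.atTop
        (nhds (J + ((R:ℝ):ℂ) • Kinf)) :=
      Filter.Tendsto.add tendsto_const_nhds (Filter.Tendsto.smul hcoe hKt)
    have hmem : ∀ n, (J + ((u (φ n) : ℝ):ℂ) • K (φ n)) ∈
        {M : Matrix (Fin d × Fin d) (Fin d × Fin d) ℂ | M.PosSemidef} :=
      fun n => hK3 (φ n)
    exact NuPfAux.isClosed_psd.mem_of_tendsto htend (Filter.Eventually.of_forall hmem)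
  have hLeast : IsLeast Sc R := ⟨hRmem, fun s hs => csInf_le hbdd hs⟩
  refine ⟨R, by rw [hSeq]; exact hLeast, ?_⟩
  -- now the decomposition costs
  have h1R : (0:ℝ) < 1 + R := by linarith
  have hmax : ∀ a : ℝ, max a 0 = a + max (-a) 0 := by
    intro a
    rcases le_total 0 a with h | h
    · rw [max_eq_left h, max_eq_right (neg_nonpos.mpr h), add_zero]
    · rw [max_eq_right h, max_eq_left (neg_nonneg.mpr h)]
      ring
  have habs : ∀ a : ℝ, |a| = max a 0 + max (-a) 0 := by
    intro a
    rcases le_total 0 a with h | h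
    · rw [abs_of_nonneg h, max_eq_left h, max_eq_right (neg_nonpos.mpr h), add_zero]
    · rw [abs_of_nonpos h, max_eq_right h, max_eq_left (neg_nonneg.mpr h), zero_add]
  have hD : IsLeast (decompCosts N) (2 * R + 1) := by
    constructor
    · -- membership
      obtain ⟨-, T, hT, hP⟩ := (NuPfAux.memS_iff hlin hTP R).mpr hRmem
      refine ⟨2, ![1 + R, -R],
        ![fun X => (((1 + R)⁻¹ : ℝ) : ℂ) • (N X + (R : ℂ) • T X), T], ?_, ?_, ?_⟩
      · intro i
        fin_cases i
        · exact hP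
        · exact hT
      · intro X
        rw [Fin.sum_univ_two]
        simp only [Matrix.cons_val_zero, Matrix.cons_val_one, Matrix.head_cons]
        rw [smul_smul, show (((1 + R : ℝ):ℂ)) * (((1 + R)⁻¹ : ℝ) : ℂ) = 1 by
          rw [← Complex.ofReal_mul, mul_inv_cancel₀ h1R.ne', Complex.ofReal_one], one_smul]
        rw [show ((-R : ℝ) : ℂ) = -((R:ℝ):ℂ) by push_cast; ring, neg_smul]
        rw [add_neg_cancel_right]
      · rw [Fin.sum_univ_two]
        simp only [Matrix.cons_val_zero, Matrix.cons_val_one, Matrix.head_cons]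
        rw [abs_neg, abs_of_nonneg hR0, abs_of_nonneg h1R.le]
        ring
    · -- lower bound
      rintro c ⟨s, η, O, hO, hdec, hcost⟩
      set i₀ : Fin d := ⟨0, hd⟩ with hi₀
      have hsum1 : ∑ i, η i = 1 := by
        have h1 : (N (Matrix.single i₀ i₀ 1)).trace = 1 := by
          rw [hTP, Matrix.trace_single_eq_same]
        have h2 : (N (Matrix.single i₀ i₀ 1)).trace = ∑ i, ((η i : ℝ) : ℂ) := by
          rw [hdec, Matrix.trace_sum]
          refine Finset.sum_congr rfl fun i _ => ?_
          rw [Matrix.trace_smul, (hO i).2.2, Matrix.trace_single_eq_same, smul_eq_mul,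
            mul_one]
        rw [h1] at h2
        exact_mod_cast h2.symm
      set q : ℝ := ∑ i, max (-η i) 0 with hq
      have hq0 : 0 ≤ q := Finset.sum_nonneg fun i _ => le_max_right _ _
      have hceq : c = 1 + 2 * q := by
        have hps : ∑ i, max (η i) 0 = 1 + q := by
          rw [hq, show (1:ℝ) = ∑ i, η i from hsum1.symm, ← Finset.sum_add_distrib]
          exact Finset.sum_congr rfl fun i _ => hmax (η i)
        rw [hcost, show (fun i => |η i|) = fun i => max (η i) 0 + max (-η i) 0 from
          funext fun i => habs (η i)]
        rw [Finset.sum_add_distrib, hps, ← hq]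
        ring
      have hJsum : J = ∑ i, ((η i : ℝ) : ℂ) • choiMatrix (O i) := by
        ext p r
        simp [hJdef, choiMatrix, hdec, Matrix.sum_apply, Matrix.smul_apply]
      have hqSc : q ∈ Sc := by
        set L : Matrix (Fin d × Fin d) (Fin d × Fin d) ℂ :=
          ∑ i, ((max (-η i) 0 : ℝ) : ℂ) • choiMatrix (O i) with hL
        have hLpsd : L.PosSemidef := NuPfAux.psd_sum _ _ fun i _ =>
          NuPfAux.psd_smul (NuPfAux.choi_psd_of_cp (hO i).2.1) (le_max_right _ _)
        have hLm : ptraceB L = ((q : ℝ) : ℂ) • 1 := by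
          rw [hL, NuPfAux.ptraceB_sum]
          rw [show (fun i => ptraceB (((max (-η i) 0 : ℝ) : ℂ) • choiMatrix (O i)))
              = fun i => ((max (-η i) 0 : ℝ) : ℂ) • (1 : Matrix (Fin d) (Fin d) ℂ) from
            funext fun i => by rw [NuPfAux.ptraceB_smul, NuPfAux.ptraceB_choi (hO i).2.2]]
          rw [← Finset.sum_smul]
          congr 1
          rw [hq]
          push_cast
          rfl
        have hJL : (J + L).PosSemidef := by
          have hsum : J + L = ∑ i, ((max (η i) 0 : ℝ) : ℂ) • choiMatrix (O i) := by
            rw [hJsum, hL, ← Finset.sum_add_distrib]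
            refine Finset.sum_congr rfl fun i _ => ?_
            rw [← add_smul]
            congr 1
            rw [show max (η i) 0 = η i + max (-η i) 0 from hmax (η i)]
            push_cast
            ring
          rw [hsum]
          exact NuPfAux.psd_sum _ _ fun i _ =>
            NuPfAux.psd_smul (NuPfAux.choi_psd_of_cp (hO i).2.1) (le_max_right _ _)
        by_cases hqz : q = 0
        · refine ⟨hq0, Kdep, hKdepPsd, hKdepM, ?_⟩
          have hLzero : L = 0 := by
            rw [hL]
            refine Finset.sum_eq_zero fun i _ => ?_
            have hz : ∑ j, max (-η j) 0 = 0 := by rw [← hq]; exact hqz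
            have : max (-η i) 0 = 0 := (Finset.sum_eq_zero_iff_of_nonneg
                (fun j _ => le_max_right (-η j) 0)).mp hz i (Finset.mem_univ i)
            rw [this]
            simp
          rw [hqz]
          simp only [Complex.ofReal_zero, zero_smul, add_zero]
          have : J = J + L := by rw [hLzero, add_zero]
          rw [this]
          exact hJL
        · have hqpos : 0 < q := lt_of_le_of_ne hq0 (Ne.symm hqz)
          refine ⟨hq0, ((q⁻¹ : ℝ) : ℂ) • L,
            NuPfAux.psd_smul hLpsd (inv_nonneg.mpr hq0), ?_, ?_⟩
          · rw [NuPfAux.ptraceB_smul, hLm, smul_smul, ← Complex.ofReal_mul,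
              inv_mul_cancel₀ hqz, Complex.ofReal_one, one_smul]
          · rw [smul_smul, ← Complex.ofReal_mul, mul_inv_cancel₀ hqz, Complex.ofReal_one,
              one_smul]
            exact hJL
      have hRq : R ≤ q := hLeast.2 hqSc
      rw [hceq]
      linarith
  have hInf : sInf (decompCosts N) = 2 * R + 1 := hD.csInf_eq
  rw [show nu N = Real.logb 2 (sInf (decompCosts N)) from rfl, hInf]
  exact Real.rpow_logb (by norm_num) (by norm_num) (by linarith)


end
end
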